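/- arXiv:2310.15312 — 11 statements merged into one kernel-verified Lean document; each statement's English description precedes it below -/
import Mathlib

section
/- For all integers h and k with k ≠ 0, and all natural numbers n, the number M_n(h,k) := k^n (B_n(h/k) - B_n) is an integer, where B_n(u) is the n-th Bernoulli polynomial and B_n = B_n(0). -/
open Finset

/-- `q` is `p`-integral: it can be written with denominator not divisible by `p`. -/
def PInt (p : ℕ) (q : ℚ) : Prop := ∃ a b : ℤ, ¬ (p:ℤ) ∣ b ∧ q = a / b

lemma nd_ne_zero {p : ℕ} {b : ℤ} (hb : ¬ (p:ℤ) ∣ b) : (b:ℚ) ≠ 0 := by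
  intro h0
  exact hb (by rw [show b = 0 by exact_mod_cast h0]; exact dvd_zero _)

lemma pint_int {p : ℕ} (hp : p.Prime) (a : ℤ) : PInt p a :=
  ⟨a, 1, fun hd => hp.one_lt.ne' (Nat.dvd_one.mp (by exact_mod_cast hd)), by simp⟩

lemma pint_add {p : ℕ} (hp : p.Prime) {q r : ℚ} (hq : PInt p q) (hr : PInt p r) :
    PInt p (q + r) := by
  obtain ⟨a, b, hb, rfl⟩ := hq
  obtain ⟨c, d, hd, rfl⟩ := hr
  have hpz : Prime (p:ℤ) := Nat.prime_iff_prime_int.mp hp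
  refine ⟨a * d + c * b, b * d, fun hdvd => ?_, ?_⟩
  · rcases hpz.dvd_mul.mp hdvd with h1 | h1 <;> tauto
  · have hb0 := nd_ne_zero hb
    have hd0 := nd_ne_zero hd
    field_simp
    push_cast; ring

lemma pint_mul {p : ℕ} (hp : p.Prime) {q r : ℚ} (hq : PInt p q) (hr : PInt p r) :
    PInt p (q * r) := by
  obtain ⟨a, b, hb, rfl⟩ := hq
  obtain ⟨c, d, hd, rfl⟩ := hr
  have hpz : Prime (p:ℤ) := Nat.prime_iff_prime_int.mp hp
  refine ⟨a * c, b * d, fun hdvd => ?_, ?_⟩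
  · rcases hpz.dvd_mul.mp hdvd with h1 | h1 <;> tauto
  · push_cast; rw [div_mul_div_comm]

lemma pint_neg {p : ℕ} {q : ℚ} (hq : PInt p q) : PInt p (-q) := by
  obtain ⟨a, b, hb, rfl⟩ := hq
  exact ⟨-a, b, hb, by push_cast; ring⟩

lemma pint_sub {p : ℕ} (hp : p.Prime) {q r : ℚ} (hq : PInt p q) (hr : PInt p r) :
    PInt p (q - r) := by
  rw [sub_eq_add_neg]; exact pint_add hp hq (pint_neg hr)

lemma pint_sum {p : ℕ} (hp : p.Prime) {s : Finset ℕ} {f : ℕ → ℚ}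
    (hf : ∀ i ∈ s, PInt p (f i)) : PInt p (∑ i ∈ s, f i) := by
  classical
  induction s using Finset.cons_induction with
  | empty => simpa using pint_int hp 0
  | cons i s his ih =>
      rw [Finset.sum_cons]
      exact pint_add hp (hf i (Finset.mem_cons_self i s))
        (ih fun j hj => hf j (Finset.mem_cons_of_mem hj))

lemma pint_pow {p : ℕ} (hp : p.Prime) {q : ℚ} (hq : PInt p q) (n : ℕ) : PInt p (q ^ n) := by
  induction n with
  | zero => simpa using pint_int hp 1
  | succ n ih => rw [pow_succ]; exact pint_mul hp ih hq

/-- A rational that is `p`-integral for all primes `p` is an integer. -/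
lemma int_of_forall_pint {q : ℚ} (h : ∀ p : ℕ, p.Prime → PInt p q) :
    ∃ m : ℤ, q = m := by
  refine ⟨q.num, ?_⟩
  suffices hq : q.den = 1 by
    conv_lhs => rw [← Rat.num_div_den q]
    rw [hq]; simp
  by_contra hden
  obtain ⟨p, hp, hpd⟩ := Nat.exists_prime_and_dvd hden
  obtain ⟨a, b, hb, hab⟩ := h p hp
  have hb0 : (b:ℚ) ≠ 0 := nd_ne_zero hb
  have key : q.num * b = a * (q.den : ℤ) := by
    have hd0 : (q.den : ℚ) ≠ 0 := by exact_mod_cast q.den_ne_zero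
    have h2 := hab
    rw [← Rat.num_div_den q, div_eq_div_iff hd0 hb0] at h2
    exact_mod_cast h2
  have hpz : Prime (p:ℤ) := Nat.prime_iff_prime_int.mp hp
  have hpnum : (p:ℤ) ∣ q.num * b := by
    rw [key]
    exact Dvd.dvd.mul_left (by exact_mod_cast hpd) a
  rcases hpz.dvd_mul.mp hpnum with h1 | h1
  · have hcop := q.reduced
    have h2 : p ∣ q.num.natAbs := by
      have := Int.natAbs_dvd_natAbs.mpr h1
      simpa using this
    have : p ∣ 1 := hcop ▸ Nat.dvd_gcd h2 hpd
    exact hp.one_lt.ne' (Nat.dvd_one.mp this)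
  · exact hb h1


lemma sum_range_mul_split {M : Type*} [AddCommMonoid M] (f : ℕ → M) (a b : ℕ) :
    ∑ k ∈ range (a * b), f k = ∑ i ∈ range a, ∑ j ∈ range b, f (i * b + j) := by
  induction a with
  | zero => simp
  | succ a ih =>
      rw [Nat.succ_mul, Finset.sum_range_add, ih, Finset.sum_range_succ]

lemma pow_sum_dvd (p : ℕ) (hp : 0 < p) (m N : ℕ) :
    p ^ N ∣ ∑ k ∈ range (p ^ (N + 1)), k ^ m := by
  induction N with
  | zero => simp
  | succ N ih =>
      haveI : NeZero (p ^ (N + 1)) := ⟨pow_ne_zero _ hp.ne'⟩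
      obtain ⟨c, hc⟩ := ih
      have key : ((∑ k ∈ range (p ^ (N + 1 + 1)), k ^ m : ℕ) : ZMod (p ^ (N + 1))) = 0 := by
        rw [pow_succ' p (N + 1), sum_range_mul_split (fun k => k ^ m) p (p ^ (N + 1))]
        push_cast
        have hz : ((p ^ (N + 1) : ℕ) : ZMod (p ^ (N + 1))) = 0 := ZMod.natCast_self _
        push_cast at hz
        simp only [hz, mul_zero, zero_add]  -- (↑i * 0 + ↑j)^m = ↑j^m
        rw [Finset.sum_const, Finset.card_range]
        have : (∑ j ∈ range (p ^ (N + 1)), (j : ZMod (p ^ (N + 1))) ^ m)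
            = ((∑ j ∈ range (p ^ (N + 1)), j ^ m : ℕ) : ZMod (p ^ (N + 1))) := by push_cast; rfl
        rw [this, hc]
        push_cast
        rw [nsmul_eq_mul, ← mul_assoc, ← pow_succ', hz, zero_mul]
      exact (ZMod.natCast_eq_zero_iff _ _).mp key

lemma pint_p_mul_bernoulli (p : ℕ) (hp : p.Prime) (m : ℕ) : PInt p ((p:ℚ) * bernoulli m) := by
  induction m using Nat.strong_induction_on with
  | _ m ih =>
  rcases Nat.eq_zero_or_pos m with rfl | hm
  · rw [bernoulli_zero, mul_one]
    simpa using pint_int hp (p : ℤ)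
  · set v := (m+1).factorization p with hv
    set N := v + 1 with hN
    set u := (m+1) / p ^ v with hu
    have hmu : m + 1 = p ^ v * u := (Nat.ordProj_mul_ordCompl_eq_self (m+1) p).symm
    have hpu : ¬ p ∣ u := Nat.not_dvd_ordCompl hp (m.succ_ne_zero)
    have hu0 : u ≠ 0 := fun h => hpu (h ▸ dvd_zero p)
    obtain ⟨c, hc⟩ := pow_sum_dvd p hp.pos m v
    have hp0 : (p:ℚ) ≠ 0 := Nat.cast_ne_zero.mpr hp.pos.ne'
    have hu0' : (u:ℚ) ≠ 0 := Nat.cast_ne_zero.mpr hu0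
    have hm1 : ((m:ℚ) + 1) = (p:ℚ)^v * (u:ℚ) := by exact_mod_cast congrArg (Nat.cast : ℕ → ℚ) hmu
    have hS : (∑ k ∈ range (p ^ N), (k:ℚ) ^ m) = ((p:ℚ))^v * c := by
      have h1 : (∑ k ∈ range (p ^ N), (k:ℚ) ^ m)
          = ((∑ k ∈ range (p ^ N), k ^ m : ℕ) : ℚ) := by push_cast; rfl
      rw [h1, hc]
      push_cast; ring
    have faul := sum_range_pow (p ^ N) m
    have e1 : ((p:ℚ))^v * c =
        (∑ i ∈ range m, bernoulli i * ((m+1).choose i : ℚ) * ((p^N : ℕ) : ℚ) ^ (m+1-i) / ((m:ℚ)+1))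
          + bernoulli m * (p:ℚ)^N := by
      rw [← hS, faul, sum_range_succ]
      congr 1
      have h2 : m + 1 - m = 1 := by omega
      have h3 : (m+1).choose m = m + 1 := Nat.choose_succ_self_right m
      have hm10 : (m:ℚ) + 1 ≠ 0 := by positivity
      rw [h2, h3]
      push_cast
      field_simp
    -- the claim
    have claim : (p:ℚ) * bernoulli m = (c:ℚ) -
        ∑ i ∈ range m, ((p:ℚ) * bernoulli i) * ((m+1).choose i : ℚ)
          * ((p:ℚ)^(N*(m-i)-v) / (u:ℚ)) := by
      have hpN : ((p:ℚ))^N ≠ 0 := pow_ne_zero _ hp0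
      apply mul_left_cancel₀ hpN
      rw [mul_sub, Finset.mul_sum]
      have hterm : ∀ i ∈ range m,
          (p:ℚ)^N * (((p:ℚ) * bernoulli i) * ((m+1).choose i : ℚ) * ((p:ℚ)^(N*(m-i)-v) / (u:ℚ)))
          = (p:ℚ) * (bernoulli i * ((m+1).choose i : ℚ) * ((p^N : ℕ) : ℚ) ^ (m+1-i) / ((m:ℚ)+1)) := by
        intro i hi
        have him : i < m := mem_range.mp hi
        have hcast : ((p^N : ℕ) : ℚ) ^ (m+1-i) = (p:ℚ) ^ (N*(m+1-i)) := by
          push_cast; rw [← pow_mul]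
        have hexp : (N*(m-i)-v) + v + N = N*(m+1-i) := by
          have h3 : N*(m-i) ≥ v := by
            calc v ≤ N := by omega
            _ ≤ N * (m-i) := Nat.le_mul_of_pos_right N (by omega)
          have h4 : N * (m+1-i) = N*(m-i) + N := by
            rw [← Nat.mul_succ]; congr 1; omega
          omega
        rw [hcast, hm1, ← hexp]
        rw [pow_add, pow_add]
        field_simp
        ring
      rw [Finset.sum_congr rfl hterm, ← Finset.mul_sum]
      have e2 : (∑ i ∈ range m, bernoulli i * ((m+1).choose i : ℚ) * ((p^N : ℕ) : ℚ) ^ (m+1-i) / ((m:ℚ)+1))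
          = (p:ℚ)^v * c - bernoulli m * (p:ℚ)^N := by linarith [e1]
      rw [e2]
      have hNp : ((p:ℚ))^N = (p:ℚ)^v * (p:ℚ) := by rw [pow_succ]
      rw [hNp]
      ring
    rw [claim]
    refine pint_sub hp (pint_int hp (c:ℤ)) (pint_sum hp ?_)
    intro i hi
    refine pint_mul hp (pint_mul hp (ih i (mem_range.mp hi)) ?_) ?_
    · simpa using pint_int hp ((m+1).choose i : ℤ)
    exact ⟨(p:ℤ)^(N*(m-i)-v), (u:ℤ), fun hd => hpu (by exact_mod_cast hd), by push_cast; ring⟩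

lemma bern_eval (n : ℕ) (x : ℚ) : (Polynomial.bernoulli n).eval x
    = ∑ i ∈ range (n+1), bernoulli i * (n.choose i : ℚ) * x^(n-i) := by
  rw [show Polynomial.bernoulli n
      = ∑ i ∈ range (n + 1), Polynomial.monomial (n - i) (bernoulli i * (n.choose i : ℚ)) from rfl,
    Polynomial.eval_finset_sum]
  exact Finset.sum_congr rfl fun i hi => by rw [Polynomial.eval_monomial]

lemma bern_int_val (n t : ℕ) : ∃ z : ℤ,
    (Polynomial.bernoulli n).eval ((t:ℕ) : ℚ) - bernoulli n = (z : ℚ) := by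
  cases n with
  | zero => exact ⟨0, by simp [Polynomial.bernoulli_zero, bernoulli_zero]⟩
  | succ m =>
      refine ⟨(m+1) * ∑ k ∈ range t, (k:ℤ)^m, ?_⟩
      rw [Polynomial.bernoulli_succ_eval]
      push_cast
      ring

lemma exists_approx (p : ℕ) (hp : p.Prime) {k : ℤ} (hpk : ¬ (p:ℤ) ∣ k) (h : ℤ) :
    ∃ t : ℕ, (p:ℤ) ∣ (h - k * t) := by
  haveI : Fact p.Prime := ⟨hp⟩
  have hk0 : ((k : ZMod p)) ≠ 0 := by
    rw [Ne, ZMod.intCast_zmod_eq_zero_iff_dvd]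
    exact hpk
  refine ⟨((h : ZMod p) / (k : ZMod p)).val, ?_⟩
  rw [← ZMod.intCast_zmod_eq_zero_iff_dvd]
  push_cast
  rw [ZMod.natCast_val, ZMod.cast_id]
  field_simp
  ring

/-- **Almkvist–Meurman theorem**: for integers `h` and `k ≠ 0` and every natural
number `n`, the number `k^n * (B_n(h/k) - B_n)` is an integer, where `B_n` is the
`n`-th Bernoulli polynomial and `B_n = B_n(0)` the `n`-th Bernoulli number. -/
theorem almkvist_meurman (h k : ℤ) (hk : k ≠ 0) (n : ℕ) :
    ∃ m : ℤ, (k : ℚ) ^ n *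
      ((Polynomial.bernoulli n).eval ((h : ℚ) / (k : ℚ)) - bernoulli n) = (m : ℚ) := by
  have hk0 : (k:ℚ) ≠ 0 := Int.cast_ne_zero.mpr hk
  suffices hs : ∃ m : ℤ, ((k : ℚ) ^ n *
      ((Polynomial.bernoulli n).eval ((h : ℚ) / (k : ℚ)) - bernoulli n) : ℚ) = (m:ℚ) from hs
  apply int_of_forall_pint
  intro p hp
  by_cases hpk : (p:ℤ) ∣ k
  · -- p divides k : use the finite expansion
    obtain ⟨d, hd⟩ := hpk
    have expand : (k:ℚ)^n * ((Polynomial.bernoulli n).eval ((h:ℚ)/(k:ℚ)) - bernoulli n)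
        = ∑ i ∈ range n, bernoulli i * (n.choose i : ℚ) * (h:ℚ)^(n-i) * (k:ℚ)^i := by
      rw [bern_eval, mul_sub, Finset.mul_sum]
      have hterm : ∀ i ∈ range (n+1),
          (k:ℚ)^n * (bernoulli i * (n.choose i : ℚ) * ((h:ℚ)/(k:ℚ))^(n-i))
          = bernoulli i * (n.choose i : ℚ) * (h:ℚ)^(n-i) * (k:ℚ)^i := by
        intro i hi
        have hin : i ≤ n := by have := mem_range.mp hi; omega
        have hkk : (k:ℚ)^n = (k:ℚ)^(n-i) * (k:ℚ)^i := by
          rw [← pow_add]; congr 1; omega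
        rw [div_pow, hkk]
        field_simp
      rw [Finset.sum_congr rfl hterm, sum_range_succ]
      have hlast : bernoulli n * (n.choose n : ℚ) * (h:ℚ)^(n-n) * (k:ℚ)^n
          = bernoulli n * (k:ℚ)^n := by simp [Nat.choose_self]
      rw [hlast]
      ring
    rw [expand]
    apply pint_sum hp
    intro i hi
    match i with
    | 0 =>
        have : bernoulli 0 * ((n.choose 0 : ℕ) : ℚ) * (h:ℚ)^(n-0) * (k:ℚ)^0
            = ((h^n : ℤ) : ℚ) := by push_cast; simp [bernoulli_zero]
        rw [this]; exact pint_int hp _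
    | (i+1) =>
        have key : bernoulli (i+1) * ((n.choose (i+1) : ℕ) : ℚ) * (h:ℚ)^(n-(i+1)) * (k:ℚ)^(i+1)
            = ((p:ℚ) * bernoulli (i+1)) *
              (((n.choose (i+1) : ℕ) : ℚ) * (h:ℚ)^(n-(i+1)) * ((d:ℚ) * (k:ℚ)^i)) := by
          have : (k:ℚ) = (p:ℚ) * (d:ℚ) := by exact_mod_cast congrArg (Int.cast : ℤ → ℚ) hd
          rw [pow_succ, this]
          ring
        rw [key]
        refine pint_mul hp (pint_p_mul_bernoulli p hp (i+1)) ?_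
        refine pint_mul hp (pint_mul hp ?_ ?_) ?_
        · simpa using pint_int hp ((n.choose (i+1) : ℕ) : ℤ)
        · simpa using pint_pow hp (pint_int hp h) (n-(i+1))
        · have : ((d:ℚ) * (k:ℚ)^i) = (((d * k^i : ℤ)) : ℚ) := by push_cast; ring
          rw [this]; exact pint_int hp _
  · -- p does not divide k : approximation argument
    obtain ⟨t, d, hd⟩ : ∃ t : ℕ, ∃ d : ℤ, h - k * t = p * d := by
      obtain ⟨t, ht⟩ := exists_approx p hp hpk h
      exact ⟨t, ht.choose, ht.choose_spec⟩
    set x : ℚ := (h:ℚ)/(k:ℚ) with hx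
    have hxp : PInt p x := ⟨h, k, hpk, rfl⟩
    have hxt : x - (t:ℚ) = (p:ℚ) * ((d:ℚ)/(k:ℚ)) := by
      rw [hx]
      have : (h:ℚ) - (k:ℚ) * (t:ℚ) = (p:ℚ) * (d:ℚ) := by exact_mod_cast congrArg (Int.cast : ℤ → ℚ) hd
      field_simp
      linarith [this]
    have split : (k:ℚ)^n * ((Polynomial.bernoulli n).eval x - bernoulli n)
        = (k:ℚ)^n * ((Polynomial.bernoulli n).eval x - (Polynomial.bernoulli n).eval (t:ℚ))
          + (k:ℚ)^n * ((Polynomial.bernoulli n).eval (t:ℚ) - bernoulli n) := by ring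
    rw [split]
    refine pint_add hp ?_ ?_
    · -- difference term
      have diff : (Polynomial.bernoulli n).eval x - (Polynomial.bernoulli n).eval (t:ℚ)
          = ∑ i ∈ range (n+1), bernoulli i * (n.choose i : ℚ) * (x^(n-i) - (t:ℚ)^(n-i)) := by
        rw [bern_eval, bern_eval, ← Finset.sum_sub_distrib]
        exact Finset.sum_congr rfl fun i hi => by ring
      rw [diff]
      refine pint_mul hp (pint_pow hp (pint_int hp k) n) (pint_sum hp ?_)
      intro i hi
      have hgeom : x^(n-i) - (t:ℚ)^(n-i)
          = (∑ a ∈ range (n-i), x^a * (t:ℚ)^(n-i-1-a)) * (x - (t:ℚ)) :=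
        (geom_sum₂_mul x (t:ℚ) (n-i)).symm
      have key : bernoulli i * (n.choose i : ℚ) * (x^(n-i) - (t:ℚ)^(n-i))
          = ((p:ℚ) * bernoulli i) *
            ((n.choose i : ℚ) * ((∑ a ∈ range (n-i), x^a * (t:ℚ)^(n-i-1-a)) * ((d:ℚ)/(k:ℚ)))) := by
        rw [hgeom, hxt]
        ring
      rw [key]
      refine pint_mul hp (pint_p_mul_bernoulli p hp i) ?_
      refine pint_mul hp ?_ (pint_mul hp (pint_sum hp ?_) ⟨d, k, hpk, rfl⟩)
      · simpa using pint_int hp ((n.choose i : ℕ) : ℤ)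
      · intro a ha
        refine pint_mul hp (pint_pow hp hxp a) ?_
        simpa using pint_pow hp (pint_int hp (t:ℤ)) (n-i-1-a)
    · obtain ⟨z, hz⟩ := bern_int_val n t
      rw [hz]
      exact pint_mul hp (pint_pow hp (pint_int hp k) n) (pint_int hp z)
end

section
/- If f and g are Hurwitz series with g having zero constant term, then the composition f(g(x)) is a Hurwitz series. -/
open PowerSeries

/-- A Hurwitz series: a formal power series `∑ f_n x^n / n!` over `ℚ` with all
`f_n = n! · (coefficient of x^n)` integers. -/
def IsHurwitz (f : PowerSeries ℚ) : Prop :=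
  ∀ n : ℕ, ∃ m : ℤ, (n.factorial : ℚ) * PowerSeries.coeff n f = (m : ℚ)

/-- Composition `f(g(x))` of formal power series, valid when `g` has zero
constant term (so that the defining sums are finite). -/
noncomputable def PowerSeries.comp (f g : PowerSeries ℚ) : PowerSeries ℚ :=
  PowerSeries.mk fun n =>
    ∑ k ∈ Finset.range (n + 1), PowerSeries.coeff k f * PowerSeries.coeff n (g ^ k)

lemma isHurwitz_one : IsHurwitz 1 := by
  intro n
  rcases n with _|n
  · exact ⟨1, by simp⟩
  · exact ⟨0, by simp [coeff_one]⟩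

lemma isHurwitz_mul {a b : PowerSeries ℚ} (ha : IsHurwitz a) (hb : IsHurwitz b) :
    IsHurwitz (a * b) := by
  intro n
  choose A hA using ha
  choose B hB using hb
  refine ⟨∑ p ∈ Finset.HasAntidiagonal.antidiagonal n, (n.choose p.1 : ℤ) * A p.1 * B p.2, ?_⟩
  rw [coeff_mul, Finset.mul_sum]
  push_cast
  refine Finset.sum_congr rfl ?_
  rintro ⟨i,j⟩ hij
  rw [Finset.HasAntidiagonal.mem_antidiagonal] at hij
  subst hij
  have h1 : ((i+j).factorial : ℚ) = ((i+j).choose i) * i.factorial * j.factorial := by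
    rw [← Nat.add_choose_mul_factorial_mul_factorial i j]; push_cast
    rw [Nat.choose_symm_add]
  rw [h1]
  calc ((i+j).choose i : ℚ) * i.factorial * j.factorial *
        ((coeff i) a * (coeff j) b)
      = ((i+j).choose i : ℚ) * ((i.factorial : ℚ) * coeff i a)
        * ((j.factorial : ℚ) * coeff j b) := by ring
    _ = ((i+j).choose i : ℚ) * A i * B j := by rw [hA, hB]

lemma isHurwitz_deriv {a : PowerSeries ℚ} (ha : IsHurwitz a) :
    IsHurwitz (d⁄dX ℚ a) := by
  intro n
  obtain ⟨m, hm⟩ := ha (n + 1)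
  refine ⟨m, ?_⟩
  rw [coeff_derivative, ← hm, Nat.factorial_succ]
  push_cast
  ring

lemma isHurwitz_of_deriv {a : PowerSeries ℚ} (h0 : ∃ m : ℤ, constantCoeff a = m)
    (hd : IsHurwitz (d⁄dX ℚ a)) : IsHurwitz a := by
  intro n
  rcases n with _|n
  · obtain ⟨m, hm⟩ := h0
    exact ⟨m, by simpa using hm⟩
  · obtain ⟨m, hm⟩ := hd n
    refine ⟨m, ?_⟩
    rw [coeff_derivative] at hm
    rw [← hm, Nat.factorial_succ]
    push_cast
    ring

lemma isHurwitz_pow_smul (g : PowerSeries ℚ) (hg : IsHurwitz g)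
    (hg0 : PowerSeries.constantCoeff g = 0) (k : ℕ) :
    IsHurwitz ((((k.factorial : ℚ))⁻¹) • g ^ k) := by
  induction k with
  | zero => simpa using isHurwitz_one
  | succ k ih =>
    apply isHurwitz_of_deriv
    · refine ⟨0, ?_⟩
      simp [hg0, Nat.succ_ne_zero]
    · have hD : d⁄dX ℚ ((((k+1).factorial : ℚ))⁻¹ • g ^ (k+1))
          = ((((k.factorial : ℚ))⁻¹) • g ^ k) * d⁄dX ℚ g := by
        have hk : (k.factorial : ℚ) ≠ 0 := by exact_mod_cast k.factorial_ne_zero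
        rw [Derivation.map_smul, Derivation.leibniz_pow]
        simp only [Nat.add_sub_cancel, smul_eq_mul]
        rw [← Nat.cast_smul_eq_nsmul ℚ (k+1), smul_smul, Nat.factorial_succ]
        rw [show (((k+1) * k.factorial : ℕ) : ℚ)⁻¹ * ((k+1 : ℕ) : ℚ) = (k.factorial : ℚ)⁻¹ by
          push_cast; field_simp]
        rw [smul_mul_assoc]
      rw [hD]
      exact isHurwitz_mul ih (isHurwitz_deriv hg)

/-- If `f` and `g` are Hurwitz series and `g` has zero constant term, then the
composition `f(g(x))` is a Hurwitz series. -/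
theorem isHurwitz_comp (f g : PowerSeries ℚ) (hf : IsHurwitz f) (hg : IsHurwitz g)
    (hg0 : PowerSeries.constantCoeff g = 0) :
    IsHurwitz (PowerSeries.comp f g) := by
  intro n
  choose F hF using hf
  choose M hM using fun k => isHurwitz_pow_smul g hg hg0 k n
  refine ⟨∑ k ∈ Finset.range (n + 1), F k * M k, ?_⟩
  rw [PowerSeries.comp, coeff_mk, Finset.mul_sum]
  push_cast
  refine Finset.sum_congr rfl fun k _ => ?_
  have hk : (k.factorial : ℚ) ≠ 0 := by exact_mod_cast k.factorial_ne_zero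
  have hMk := hM k
  rw [map_smul, smul_eq_mul] at hMk
  calc (n.factorial : ℚ) * ((coeff k) f * (coeff n) (g ^ k))
      = ((k.factorial : ℚ) * coeff k f) *
        ((n.factorial : ℚ) * ((k.factorial : ℚ)⁻¹ * coeff n (g ^ k))) := by
        field_simp
    _ = (F k : ℚ) * (M k : ℚ) := by rw [hF, hMk]
end

section
/- If g = ∑_{n≥1} g_n x^n/n! is a Hurwitz series with g_1 = 1, then its compositional inverse is also a Hurwitz series. -/
open PowerSeries

open Finset

lemma coeff_comp (f g : PowerSeries ℚ) (n : ℕ) :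
    coeff n (f.comp g) = ∑ k ∈ range (n + 1), coeff k f * coeff n (g ^ k) := by
  simp [PowerSeries.comp]

lemma coeff_pow_of_lt {f : PowerSeries ℚ} (hf : constantCoeff f = 0) {k n : ℕ}
    (h : n < k) : coeff n (f ^ k) = 0 := by
  have hd : (X : PowerSeries ℚ) ^ k ∣ f ^ k :=
    pow_dvd_pow_of_dvd (X_dvd_iff.mpr hf) k
  exact X_pow_dvd_iff.mp hd n h

lemma coeff_pow_congr {f f' : PowerSeries ℚ} {N : ℕ}
    (hag : ∀ i ≤ N, coeff i f = coeff i f') (k : ℕ) :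
    ∀ m ≤ N, coeff m (f ^ k) = coeff m (f' ^ k) := by
  induction k with
  | zero => simp
  | succ k ih =>
    intro m hm
    rw [pow_succ, pow_succ, coeff_mul, coeff_mul]
    refine Finset.sum_congr rfl fun p hp => ?_
    rw [Finset.HasAntidiagonal.mem_antidiagonal] at hp
    rw [ih p.1 (le_trans (by omega) hm), hag p.2 (le_trans (by omega) hm)]

lemma coeff_pow_congr_lt {f f' : PowerSeries ℚ} (hf : constantCoeff f = 0)
    (hf' : constantCoeff f' = 0) {N : ℕ}
    (hag : ∀ i < N, coeff i f = coeff i f') {k : ℕ} (hk : 2 ≤ k) :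
    coeff N (f ^ k) = coeff N (f' ^ k) := by
  obtain ⟨k, rfl⟩ : ∃ k', k = k' + 1 := ⟨k - 1, by omega⟩
  have hk1 : 1 ≤ k := by omega
  rw [pow_succ, pow_succ, coeff_mul, coeff_mul]
  refine Finset.sum_congr rfl fun p hp => ?_
  rw [Finset.HasAntidiagonal.mem_antidiagonal] at hp
  by_cases h2 : p.2 = 0
  · rw [h2]
    simp only [coeff_zero_eq_constantCoeff, hf, hf', mul_zero]
  · by_cases h1 : p.1 = 0
    · rw [h1, coeff_pow_of_lt hf hk1, coeff_pow_of_lt hf' hk1, zero_mul, zero_mul]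
    · have hp1 : p.1 < N := by omega
      rw [coeff_pow_congr (fun i hi => hag i (lt_of_le_of_lt hi (by omega))) k p.1 le_rfl,
        hag p.2 (by omega)]

lemma sum_triangle (n : ℕ) (F : ℕ → ℕ → ℚ) (hF : ∀ i j, n < i + j → F i j = 0) :
    ∑ k ∈ range (n + 1), ∑ p ∈ Finset.HasAntidiagonal.antidiagonal k, F p.1 p.2
      = ∑ i ∈ range (n + 1), ∑ j ∈ range (n + 1), F i j := by
  have h1 : ∀ k : ℕ, ∑ p ∈ Finset.HasAntidiagonal.antidiagonal k, F p.1 p.2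
      = ∑ i ∈ range (k + 1), F i (k - i) := fun k =>
    Finset.Nat.sum_antidiagonal_eq_sum_range_succ_mk (fun p => F p.1 p.2) k
  simp_rw [h1]
  simp_rw [Finset.range_eq_Ico]
  rw [← Finset.sum_Ico_Ico_comm 0 (n + 1) (fun i k => F i (k - i))]
  refine Finset.sum_congr rfl fun i hi => ?_
  rw [Finset.mem_Ico] at hi
  rw [Finset.sum_Ico_eq_sum_range]
  simp only [Nat.add_sub_cancel_left]
  rw [← Finset.range_eq_Ico]
  apply Finset.sum_subset
  · intro x hx
    rw [Finset.mem_range] at hx ⊢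
    omega
  · intro x hx hnx
    rw [Finset.mem_range] at hx hnx
    exact hF i x (by omega)

lemma comp_one (v : PowerSeries ℚ) : (1 : PowerSeries ℚ).comp v = 1 := by
  ext n
  rw [coeff_comp]
  rw [Finset.sum_eq_single 0]
  · simp
  · intro k hk hk0
    rw [coeff_one, if_neg hk0, zero_mul]
  · intro h
    simp at h

lemma comp_mul (a b v : PowerSeries ℚ) (hv : constantCoeff v = 0) :
    (a * b).comp v = a.comp v * b.comp v := by
  ext n
  rw [coeff_comp]
  have hvan : ∀ i j : ℕ, n < i + j →
      coeff i a * coeff j b * coeff n (v ^ (i + j)) = 0 := fun i j hij => by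
    rw [coeff_pow_of_lt hv hij, mul_zero]
  calc ∑ k ∈ range (n + 1), coeff k (a * b) * coeff n (v ^ k)
      = ∑ k ∈ range (n + 1), ∑ p ∈ Finset.HasAntidiagonal.antidiagonal k,
          coeff p.1 a * coeff p.2 b * coeff n (v ^ (p.1 + p.2)) := by
        refine Finset.sum_congr rfl fun k hk => ?_
        rw [coeff_mul, Finset.sum_mul]
        refine Finset.sum_congr rfl fun p hp => ?_
        rw [Finset.HasAntidiagonal.mem_antidiagonal] at hp
        rw [hp]
    _ = ∑ i ∈ range (n + 1), ∑ j ∈ range (n + 1),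
          coeff i a * coeff j b * coeff n (v ^ (i + j)) :=
        sum_triangle n _ hvan
    _ = ∑ p ∈ Finset.HasAntidiagonal.antidiagonal n, coeff p.1 (a.comp v) * coeff p.2 (b.comp v) := by
        have key : ∀ p : ℕ × ℕ, p ∈ Finset.HasAntidiagonal.antidiagonal n →
            coeff p.1 (a.comp v) * coeff p.2 (b.comp v)
              = ∑ i ∈ range (n + 1), ∑ j ∈ range (n + 1),
                  coeff i a * coeff j b * (coeff p.1 (v ^ i) * coeff p.2 (v ^ j)) := by
          intro p hp
          rw [Finset.HasAntidiagonal.mem_antidiagonal] at hp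
          have e1 : coeff p.1 (a.comp v)
              = ∑ i ∈ range (n + 1), coeff i a * coeff p.1 (v ^ i) := by
            rw [coeff_comp]
            apply Finset.sum_subset
            · intro x hx; rw [Finset.mem_range] at hx ⊢; omega
            · intro x hx hnx
              rw [Finset.mem_range] at hx hnx
              rw [coeff_pow_of_lt hv (by omega), mul_zero]
          have e2 : coeff p.2 (b.comp v)
              = ∑ j ∈ range (n + 1), coeff j b * coeff p.2 (v ^ j) := by
            rw [coeff_comp]
            apply Finset.sum_subset
            · intro x hx; rw [Finset.mem_range] at hx ⊢; omega
            · intro x hx hnx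
              rw [Finset.mem_range] at hx hnx
              rw [coeff_pow_of_lt hv (by omega), mul_zero]
          rw [e1, e2, Finset.sum_mul_sum]
          refine Finset.sum_congr rfl fun i _ => Finset.sum_congr rfl fun j _ => by ring
        refine Eq.trans ?_ (Finset.sum_congr rfl key).symm
        conv_rhs => rw [Finset.sum_comm]
        refine Finset.sum_congr rfl fun i _ => ?_
        conv_rhs => rw [Finset.sum_comm]
        refine Finset.sum_congr rfl fun j _ => ?_
        rw [pow_add, coeff_mul, Finset.mul_sum]
    _ = coeff n (a.comp v * b.comp v) := by exact (coeff_mul n _ _).symm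

lemma comp_pow (u v : PowerSeries ℚ) (hv : constantCoeff v = 0) (j : ℕ) :
    (u ^ j).comp v = u.comp v ^ j := by
  induction j with
  | zero => simpa using comp_one v
  | succ j ih => rw [pow_succ, comp_mul _ _ _ hv, ih, pow_succ]

lemma comp_assoc (f u v : PowerSeries ℚ) (hu : constantCoeff u = 0)
    (hv : constantCoeff v = 0) : (f.comp u).comp v = f.comp (u.comp v) := by
  ext n
  rw [coeff_comp, coeff_comp]
  calc ∑ k ∈ range (n + 1), coeff k (f.comp u) * coeff n (v ^ k)
      = ∑ k ∈ range (n + 1), ∑ j ∈ range (n + 1),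
          coeff j f * coeff k (u ^ j) * coeff n (v ^ k) := by
        refine Finset.sum_congr rfl fun k hk => ?_
        rw [Finset.mem_range] at hk
        rw [coeff_comp, Finset.sum_mul]
        apply Finset.sum_subset
        · intro x hx
          rw [Finset.mem_range] at hx ⊢; omega
        · intro x hx hnx
          rw [Finset.mem_range] at hx hnx
          rw [coeff_pow_of_lt hu (by omega), mul_zero, zero_mul]
    _ = ∑ j ∈ range (n + 1), coeff j f * coeff n ((u.comp v) ^ j) := by
        rw [Finset.sum_comm]
        refine Finset.sum_congr rfl fun j _ => ?_
        rw [← comp_pow u v hv j, coeff_comp, Finset.mul_sum]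
        refine Finset.sum_congr rfl fun k _ => by ring

lemma comp_X (f : PowerSeries ℚ) : f.comp X = f := by
  ext n
  rw [coeff_comp]
  rw [Finset.sum_eq_single n]
  · rw [← pow_one ((X : PowerSeries ℚ) ^ n), ← pow_mul, mul_one, coeff_X_pow, if_pos rfl,
      mul_one]
  · intro k hk hkn
    rw [Finset.mem_range] at hk
    rw [coeff_X_pow, if_neg (fun h => hkn h.symm), mul_zero]
  · intro h
    simp at h

lemma X_comp (f : PowerSeries ℚ) (hf : constantCoeff f = 0) :
    (X : PowerSeries ℚ).comp f = f := by
  ext n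
  rw [coeff_comp]
  rcases Nat.eq_zero_or_pos n with rfl | hn
  · simp [hf]
  · rw [Finset.sum_eq_single 1]
    · rw [coeff_X, if_pos rfl, pow_one, one_mul]
    · intro k hk hk1
      rw [coeff_X, if_neg hk1, zero_mul]
    · intro h
      rw [Finset.mem_range] at h
      omega

noncomputable def invC (g : PowerSeries ℚ) : ℕ → ℚ
  | 0 => 0
  | 1 => 1
  | n + 2 =>
    -∑ k ∈ Finset.Icc 2 (n + 2),
      PowerSeries.coeff k g *
        PowerSeries.coeff (n + 2)
          ((PowerSeries.mk fun i => if _ : i < n + 2 then invC g i else 0) ^ k)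

noncomputable def inv (g : PowerSeries ℚ) : PowerSeries ℚ := PowerSeries.mk (invC g)

lemma inv_const (g : PowerSeries ℚ) : constantCoeff (inv g) = 0 := by
  have : coeff 0 (inv g) = invC g 0 := coeff_mk 0 _
  rw [coeff_zero_eq_constantCoeff] at this
  rw [this, invC]

lemma inv_coeff_one (g : PowerSeries ℚ) : coeff 1 (inv g) = 1 := by
  rw [inv, coeff_mk, invC]

lemma trunc_aux (g : PowerSeries ℚ) (n : ℕ) (k : ℕ) (hk : 2 ≤ k) :
    coeff (n + 2) ((PowerSeries.mk fun i => if _ : i < n + 2 then invC g i else 0) ^ k)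
      = coeff (n + 2) ((inv g) ^ k) := by
  apply coeff_pow_congr_lt _ _ _ hk
  · have : coeff 0 (PowerSeries.mk fun i => if _ : i < n + 2 then invC g i else 0)
        = invC g 0 := by rw [coeff_mk, dif_pos (by omega)]
    rw [coeff_zero_eq_constantCoeff] at this
    rw [this, invC]
  · exact inv_const g
  · intro i hi
    rw [coeff_mk, dif_pos hi, inv, coeff_mk]

lemma invC_succ (g : PowerSeries ℚ) (n : ℕ) :
    invC g (n + 2)
      = -∑ k ∈ Finset.Icc 2 (n + 2), coeff k g * coeff (n + 2) ((inv g) ^ k) := by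
  rw [invC]
  congr 1
  refine Finset.sum_congr rfl fun k hk => ?_
  rw [Finset.mem_Icc] at hk
  rw [trunc_aux g n k hk.1]

lemma comp_inv (g : PowerSeries ℚ) (hg0 : constantCoeff g = 0)
    (hg1 : coeff 1 g = 1) : g.comp (inv g) = X := by
  ext n
  rw [coeff_comp]
  match n with
  | 0 =>
    rw [Finset.sum_range_one]
    simp [hg0]
  | 1 =>
    rw [Finset.sum_range_succ, Finset.sum_range_one]
    rw [pow_one, pow_zero, inv_coeff_one, hg1]
    simp [hg0]
  | (n + 2) =>
    rw [Finset.range_eq_Ico,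
      ← Finset.sum_Ico_consecutive _ (by omega : 0 ≤ 2) (by omega : 2 ≤ n + 2 + 1)]
    have e1 : ∑ k ∈ Finset.Ico 0 2, coeff k g * coeff (n + 2) ((inv g) ^ k)
        = invC g (n + 2) := by
      rw [show Finset.Ico 0 2 = {0, 1} from rfl]
      rw [Finset.sum_insert (by decide), Finset.sum_singleton]
      rw [pow_one, pow_zero, hg1, inv, coeff_mk]
      simp [hg0]
    have e2 : ∑ k ∈ Finset.Ico 2 (n + 2 + 1), coeff k g * coeff (n + 2) ((inv g) ^ k)
        = -invC g (n + 2) := by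
      rw [Finset.Ico_add_one_right_eq_Icc]
      rw [invC_succ, neg_neg]
    rw [e1, e2, add_neg_cancel, coeff_X, if_neg (by omega)]

lemma nat_mem_bot (c : ℕ) : ((c : ℚ)) ∈ (⊥ : Subring ℚ) :=
  Subring.mem_bot.2 ⟨(c : ℤ), by push_cast; rfl⟩

lemma factorial_pow_mem (f : PowerSeries ℚ) (hf0 : constantCoeff f = 0) (N : ℕ)
    (hint : ∀ i, i ≤ N → (i.factorial : ℚ) * coeff i f ∈ (⊥ : Subring ℚ)) :
    ∀ k, 1 ≤ k → ∀ n, n ≤ N →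
      ((n.factorial : ℚ) / (k.factorial : ℚ)) * coeff n (f ^ k) ∈ (⊥ : Subring ℚ) := by
  intro k
  induction k with
  | zero => intro h; exact absurd h (by omega)
  | succ k ih =>
    intro _ n hn
    rcases Nat.eq_zero_or_pos k with rfl | hk
    · rw [pow_one]
      simpa [Nat.factorial] using hint n hn
    rcases Nat.eq_zero_or_pos n with rfl | hn0
    · rw [coeff_pow_of_lt hf0 (by omega), mul_zero]
      exact zero_mem _
    obtain ⟨m, rfl⟩ : ∃ m, n = m + 1 := ⟨n - 1, by omega⟩
    have hL : (PowerSeries.derivative ℚ) (f ^ (k + 1))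
        = (k + 1) • (f ^ k • (PowerSeries.derivative ℚ) f) := by
      rw [Derivation.leibniz_pow, Nat.add_sub_cancel]
    have key : coeff (m + 1) (f ^ (k + 1)) * ((m : ℚ) + 1)
        = ((k : ℚ) + 1) * coeff m (f ^ k * (PowerSeries.derivative ℚ) f) := by
      have h1 := coeff_derivative (f ^ (k + 1)) m
      rw [hL] at h1
      rw [smul_eq_mul] at h1
      rw [map_nsmul] at h1
      push_cast at h1
      rw [← h1]
      ring
    have hden : ((m : ℚ) + 1) ≠ 0 := by positivity
    have hkden : ((k : ℚ) + 1) ≠ 0 := by positivity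
    have hkfac : ((k.factorial : ℚ)) ≠ 0 := Nat.cast_ne_zero.2 k.factorial_ne_zero
    have hmain : ((m + 1).factorial : ℚ) / ((k + 1).factorial : ℚ)
          * coeff (m + 1) (f ^ (k + 1))
        = ((m.factorial : ℚ) / (k.factorial : ℚ))
            * coeff m (f ^ k * (PowerSeries.derivative ℚ) f) := by
      have e : coeff (m + 1) (f ^ (k + 1))
          = ((k : ℚ) + 1) * coeff m (f ^ k * (PowerSeries.derivative ℚ) f)
            / ((m : ℚ) + 1) := by
        field_simp
        linear_combination key
      rw [e, Nat.factorial_succ, Nat.factorial_succ]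
      field_simp
      push_cast
      ring
    rw [hmain, coeff_mul, Finset.mul_sum]
    apply sum_mem
    intro p hp
    rw [Finset.HasAntidiagonal.mem_antidiagonal] at hp
    have hp1 : p.1 ≤ m := by omega
    have hch : (m.factorial : ℚ)
        = (Nat.choose m p.1 : ℚ) * (p.1.factorial : ℚ) * (p.2.factorial : ℚ) := by
      have h2 : m - p.1 = p.2 := by omega
      rw [← h2]
      exact_mod_cast (Nat.choose_mul_factorial_mul_factorial hp1).symm
    have hc2 : coeff p.2 ((PowerSeries.derivative ℚ) f)
        = coeff (p.2 + 1) f * ((p.2 : ℚ) + 1) := by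
      rw [coeff_derivative]
    have hterm : (m.factorial : ℚ) / (k.factorial : ℚ)
          * (coeff p.1 (f ^ k) * coeff p.2 ((PowerSeries.derivative ℚ) f))
        = (Nat.choose m p.1 : ℚ)
            * (((p.1.factorial : ℚ) / (k.factorial : ℚ)) * coeff p.1 (f ^ k))
            * (((p.2 + 1).factorial : ℚ) * coeff (p.2 + 1) f) := by
      rw [hch, hc2, Nat.factorial_succ]
      field_simp
      push_cast
      ring
    rw [hterm]
    exact mul_mem (mul_mem (nat_mem_bot _)
      (ih hk p.1 (by omega))) (hint (p.2 + 1) (by omega))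

lemma inv_hurwitz (g : PowerSeries ℚ)
    (hg : ∀ i : ℕ, (i.factorial : ℚ) * coeff i g ∈ (⊥ : Subring ℚ)) :
    ∀ n : ℕ, (n.factorial : ℚ) * coeff n (inv g) ∈ (⊥ : Subring ℚ) := by
  intro n
  induction n using Nat.strong_induction_on with
  | _ n ih =>
    rcases n with _ | _ | n
    · rw [inv, coeff_mk, invC, mul_zero]
      exact zero_mem _
    · rw [inv, coeff_mk, invC]
      exact Subring.mem_bot.2 ⟨1, by norm_num⟩
    · have ht0 : constantCoeff
          (PowerSeries.mk fun i => if _ : i < n + 2 then invC g i else 0) = 0 := by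
        have : coeff 0 (PowerSeries.mk fun i => if _ : i < n + 2 then invC g i else 0)
            = invC g 0 := by rw [coeff_mk, dif_pos (by omega)]
        rw [coeff_zero_eq_constantCoeff] at this
        rw [this, invC]
      have hint : ∀ i, i ≤ n + 2 → (i.factorial : ℚ)
          * coeff i (PowerSeries.mk fun i => if _ : i < n + 2 then invC g i else 0)
            ∈ (⊥ : Subring ℚ) := by
        intro i hi
        by_cases h : i < n + 2
        · rw [coeff_mk, dif_pos h]
          have := ih i h
          rwa [inv, coeff_mk] at this
        · rw [coeff_mk, dif_neg h, mul_zero]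
          exact zero_mem _
      rw [inv, coeff_mk, invC, mul_neg, Finset.mul_sum]
      apply neg_mem
      apply sum_mem
      intro k hk
      rw [Finset.mem_Icc] at hk
      have hkfac : ((k.factorial : ℚ)) ≠ 0 := Nat.cast_ne_zero.2 k.factorial_ne_zero
      have hterm : ((n + 2).factorial : ℚ) * (coeff k g * coeff (n + 2)
            ((PowerSeries.mk fun i => if _ : i < n + 2 then invC g i else 0) ^ k))
          = ((k.factorial : ℚ) * coeff k g)
              * ((((n + 2).factorial : ℚ) / (k.factorial : ℚ)) * coeff (n + 2)
                ((PowerSeries.mk fun i => if _ : i < n + 2 then invC g i else 0) ^ k)) := by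
        field_simp
      rw [hterm]
      exact mul_mem (hg k)
        (factorial_pow_mem _ ht0 (n + 2) hint k (by omega) (n + 2) le_rfl)

/-- If `g = ∑_{n≥1} g_n x^n/n!` is a Hurwitz series with `g_1 = 1`, then `g` has a
compositional inverse that is a Hurwitz series. -/
theorem isHurwitz_comp_inverse (g : PowerSeries ℚ) (hg : IsHurwitz g)
    (hg0 : PowerSeries.constantCoeff g = 0) (hg1 : PowerSeries.coeff 1 g = 1) :
    ∃ h : PowerSeries ℚ, PowerSeries.constantCoeff h = 0 ∧ IsHurwitz h ∧
      PowerSeries.comp g h = PowerSeries.X ∧ PowerSeries.comp h g = PowerSeries.X := by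
  refine ⟨inv g, inv_const g, ?_, comp_inv g hg0 hg1, ?_⟩
  · intro n
    have hmem := inv_hurwitz g (fun i => by
      obtain ⟨m, hm⟩ := hg i
      exact Subring.mem_bot.2 ⟨m, hm.symm⟩) n
    obtain ⟨m, hm⟩ := Subring.mem_bot.1 hmem
    exact ⟨m, hm.symm⟩
  · have hgX : g.comp (inv g) = X := comp_inv g hg0 hg1
    have hhX : (inv g).comp (inv (inv g)) = X :=
      comp_inv (inv g) (inv_const g) (inv_coeff_one g)
    have hasc := comp_assoc g (inv g) (inv (inv g)) (inv_const g) (inv_const (inv g))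
    rw [hgX, hhX, comp_X, X_comp _ (inv_const (inv g))] at hasc
    have e : (inv g).comp g = (inv g).comp (inv (inv g)) :=
      congrArg (fun t => (inv g).comp t) hasc.symm
    rw [e]
    exact hhX
end

section
/- For any integers h and k with k ≠ 0, the formal power series kx(e^{hx}-1)/(e^{kx}-1) is equal to a Hurwitz series times |k|x(e^x-1)/(e^{|k|x}-1). -/
open PowerSeries

lemma hurwitz_sum (m : ℕ) (f : ℕ → ℤ) :
    IsHurwitz (∑ j ∈ Finset.range m, rescale ((f j : ℚ)) (exp ℚ)) := by
  intro n
  refine ⟨∑ j ∈ Finset.range m, f j ^ n, ?_⟩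
  have hn : (n.factorial : ℚ) ≠ 0 := by exact_mod_cast n.factorial_ne_zero
  simp only [map_sum, coeff_rescale, coeff_exp, Algebra.algebraMap_self, RingHom.id_apply,
    Finset.mul_sum]
  push_cast
  field_simp

lemma hurwitz_neg (f : PowerSeries ℚ) (hf : IsHurwitz f) : IsHurwitz (-f) := by
  intro n
  obtain ⟨m, hm⟩ := hf n
  exact ⟨-m, by simp [hm.symm]⟩

lemma hurwitz_mul (f g : PowerSeries ℚ) (hf : IsHurwitz f) (hg : IsHurwitz g) :
    IsHurwitz (f * g) := by
  intro n
  choose a ha using hf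
  choose b hb using hg
  refine ⟨∑ p ∈ Finset.HasAntidiagonal.antidiagonal n, (n.choose p.1 : ℤ) * a p.1 * b p.2, ?_⟩
  rw [coeff_mul, Finset.mul_sum]
  push_cast
  refine Finset.sum_congr rfl ?_
  intro p hp
  rw [Finset.HasAntidiagonal.mem_antidiagonal] at hp
  have hnat : n.choose p.1 * p.1.factorial * p.2.factorial = n.factorial := by
    have h1 : p.1 ≤ n := by omega
    have h2 : n - p.1 = p.2 := by omega
    rw [← h2]
    exact Nat.choose_mul_factorial_mul_factorial h1
  have hfact : (n.factorial : ℚ) = (n.choose p.1 : ℚ) * p.1.factorial * p.2.factorial := by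
    exact_mod_cast hnat.symm
  rw [hfact]
  calc (n.choose p.1 : ℚ) * p.1.factorial * p.2.factorial * (coeff p.1 f * coeff p.2 g)
      = (n.choose p.1 : ℚ) * ((p.1.factorial : ℚ) * coeff p.1 f)
        * ((p.2.factorial : ℚ) * coeff p.2 g) := by ring
    _ = _ := by rw [ha, hb]


lemma rescale_zero_exp : rescale (0 : ℚ) (exp ℚ) = 1 := by
  rw [rescale_zero]
  simp [constantCoeff_exp]

lemma geomNat (n : ℕ) : rescale (n : ℚ) (exp ℚ) - 1 =
    (∑ j ∈ Finset.range n, rescale ((j : ℚ)) (exp ℚ)) * (exp ℚ - 1) := by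
  induction n with
  | zero => simp [rescale_zero_exp]
  | succ n ih =>
    rw [Finset.sum_range_succ, add_mul, ← ih]
    have h1 : rescale ((n : ℚ) + 1) (exp ℚ) = rescale (n : ℚ) (exp ℚ) * exp ℚ := by
      rw [← exp_mul_exp_eq_exp_add]
      congr 1
      rw [rescale_one]
      rfl
    push_cast
    rw [h1]
    ring

lemma geomInt (h : ℤ) : ∃ G : PowerSeries ℚ, IsHurwitz G ∧
    rescale (h : ℚ) (exp ℚ) - 1 = G * (exp ℚ - 1) := by
  rcases le_or_gt 0 h with hpos | hneg
  · lift h to ℕ using hpos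
    refine ⟨∑ j ∈ Finset.range h, rescale ((j : ℚ)) (exp ℚ), ?_, ?_⟩
    · have := hurwitz_sum h (fun j => (j : ℤ))
      simpa using this
    · exact_mod_cast geomNat h
  · set n : ℕ := (-h).toNat with hn
    have hcast : ((n : ℤ) : ℚ) = -(h : ℚ) := by
      have : (n : ℤ) = -h := Int.toNat_of_nonneg (by omega)
      exact_mod_cast this
    set S := ∑ j ∈ Finset.range n, rescale ((j : ℚ)) (exp ℚ) with hS
    refine ⟨-(rescale (h : ℚ) (exp ℚ) * S), ?_, ?_⟩
    · apply hurwitz_neg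
      have heq : rescale (h : ℚ) (exp ℚ) * S =
          ∑ j ∈ Finset.range n, rescale (((h + j : ℤ) : ℚ)) (exp ℚ) := by
        rw [hS, Finset.mul_sum]
        refine Finset.sum_congr rfl fun j _ => ?_
        rw [exp_mul_exp_eq_exp_add]
        push_cast
        ring_nf
      rw [heq]
      exact hurwitz_sum n _
    · have key : rescale (-(h:ℚ)) (exp ℚ) - 1 = S * (exp ℚ - 1) := by
        rw [← hcast]
        exact_mod_cast geomNat n
      have hmul : rescale (h : ℚ) (exp ℚ) * rescale (-(h:ℚ)) (exp ℚ) = 1 := by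
        rw [exp_mul_exp_eq_exp_add]
        simp [rescale_zero_exp]
      calc rescale (h : ℚ) (exp ℚ) - 1
          = -(rescale (h : ℚ) (exp ℚ) * (rescale (-(h:ℚ)) (exp ℚ) - 1)) := by
            rw [mul_sub, hmul]; ring
        _ = -(rescale (h : ℚ) (exp ℚ) * S) * (exp ℚ - 1) := by rw [key]; ring

/-- For integers `h` and `k ≠ 0`, the series `k·x·(e^{hx}-1)/(e^{kx}-1)` equals a
Hurwitz series times `|k|·x·(e^x-1)/(e^{|k|x}-1)`.  Stated in cross-multiplied
form (equivalent, since `ℚ⟦X⟧` is a domain and the denominators are nonzero):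
`k·x·(e^{hx}-1)·(e^{|k|x}-1) = H · |k|·x·(e^x-1)·(e^{kx}-1)`. -/
theorem am_reduction (h k : ℤ) (hk : k ≠ 0) :
    ∃ H : PowerSeries ℚ, IsHurwitz H ∧
      PowerSeries.C (k : ℚ) * PowerSeries.X * (rescale (h : ℚ) (exp ℚ) - 1) *
          (rescale (|k| : ℚ) (exp ℚ) - 1) =
        H * (PowerSeries.C (|k| : ℚ) * PowerSeries.X * (exp ℚ - 1) *
          (rescale (k : ℚ) (exp ℚ) - 1)) := by
  obtain ⟨G, hG, hGe⟩ := geomInt h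
  rcases lt_or_gt_of_ne hk with hneg | hpos
  · -- k < 0 : |k| = -k, H = G * e^{-k x}
    have habs : |(k : ℚ)| = -(k : ℚ) := abs_of_neg (by exact_mod_cast hneg)
    refine ⟨G * rescale (-(k:ℚ)) (exp ℚ), ?_, ?_⟩
    · apply hurwitz_mul _ _ hG
      have := hurwitz_sum 1 (fun _ => -k)
      simpa [habs] using this
    · rw [habs, hGe]
      have key : rescale (-(k:ℚ)) (exp ℚ) - 1 =
          -(rescale (-(k:ℚ)) (exp ℚ)) * (rescale (k:ℚ) (exp ℚ) - 1) := by
        have : rescale (-(k:ℚ)) (exp ℚ) * rescale ((k:ℚ)) (exp ℚ) = 1 := by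
          rw [exp_mul_exp_eq_exp_add]; simp [rescale_zero_exp]
        rw [neg_mul, mul_sub, this]; ring
      rw [key, map_neg]
      ring
  · -- k > 0 : |k| = k, H = G
    have habs : |(k : ℚ)| = (k : ℚ) := abs_of_pos (by exact_mod_cast hpos)
    refine ⟨G, hG, ?_⟩
    rw [habs, hGe]
    ring
end

section
/- There is a unique formal power series A over ℚ with zero constant term satisfying 1 + A = e^{(x/2)(2+A)}, and this A satisfies (1+A)^2 = e^{x(2+A)}. -/
open PowerSeries

/-- The formal exponential `e^S = ∑_{n≥0} S^n/n!` of a power series `S` with zero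
constant term. -/
noncomputable def PowerSeries.expOf (S : PowerSeries ℚ) : PowerSeries ℚ :=
  PowerSeries.comp (exp ℚ) S

namespace Postnikov

open Finset PowerSeries

lemma coeff_comp (f g : PowerSeries ℚ) (n : ℕ) :
    coeff n (PowerSeries.comp f g) =
      ∑ k ∈ Finset.range (n + 1), coeff k f * coeff n (g ^ k) :=
  coeff_mk _ _

lemma coeff_pow_of_lt {g : PowerSeries ℚ} (hg : constantCoeff g = 0) :
    ∀ k n : ℕ, n < k → coeff n (g ^ k) = 0 := by
  intro k
  induction k with
  | zero => intro n h; omega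
  | succ m ih =>
    intro n h
    rw [pow_succ', coeff_mul]
    apply Finset.sum_eq_zero
    rintro ⟨i, j⟩ hij
    rw [Finset.HasAntidiagonal.mem_antidiagonal] at hij
    rcases Nat.eq_zero_or_pos i with hi | hi
    · subst hi
      simp only [coeff_zero_eq_constantCoeff, hg, zero_mul]
    · rw [ih j (by omega), mul_zero]

lemma coeff_pow_congr {S T : PowerSeries ℚ} {n : ℕ}
    (h : ∀ j ≤ n, coeff j S = coeff j T) :
    ∀ k, ∀ j ≤ n, coeff j (S ^ k) = coeff j (T ^ k) := by
  intro k
  induction k with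
  | zero => simp
  | succ m ih =>
    intro j hj
    rw [pow_succ, pow_succ, coeff_mul, coeff_mul]
    apply Finset.sum_congr rfl
    rintro ⟨i, l⟩ hil
    rw [Finset.HasAntidiagonal.mem_antidiagonal] at hil
    rw [ih i (by omega), h l (by omega)]

lemma coeff_expOf_congr {S T : PowerSeries ℚ} {n : ℕ}
    (h : ∀ j ≤ n, coeff j S = coeff j T) :
    coeff n (PowerSeries.expOf S) = coeff n (PowerSeries.expOf T) := by
  unfold PowerSeries.expOf
  rw [coeff_comp, coeff_comp]
  exact Finset.sum_congr rfl fun k _ => by rw [coeff_pow_congr h k n le_rfl]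

lemma coeff_SA_congr {A B : PowerSeries ℚ} {n : ℕ}
    (h : ∀ m < n, coeff m A = coeff m B) :
    ∀ j ≤ n, coeff j (C (1/2 : ℚ) * X * (2 + A)) =
      coeff j (C (1/2 : ℚ) * X * (2 + B)) := by
  intro j hj
  rw [mul_assoc, mul_assoc, coeff_C_mul, coeff_C_mul]
  congr 1
  cases j with
  | zero => rw [coeff_zero_X_mul, coeff_zero_X_mul]
  | succ m =>
    rw [coeff_succ_X_mul, coeff_succ_X_mul, map_add, map_add, h m (by omega)]

noncomputable def G (B : PowerSeries ℚ) : PowerSeries ℚ :=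
  PowerSeries.expOf (C (1/2 : ℚ) * X * (2 + B)) - 1

lemma keyG {A B : PowerSeries ℚ} {n : ℕ}
    (h : ∀ m < n, coeff m A = coeff m B) :
    ∀ j ≤ n, coeff j (G A) = coeff j (G B) := by
  intro j hj
  unfold G
  rw [map_sub, map_sub]
  congr 1
  apply coeff_expOf_congr
  intro i hi
  exact coeff_SA_congr h i (le_trans hi hj)

lemma coeff_zero_G (B : PowerSeries ℚ) : coeff 0 (G B) = 0 := by
  unfold G
  rw [map_sub]
  unfold PowerSeries.expOf
  rw [coeff_comp]
  simp [exp]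

noncomputable def As : ℕ → PowerSeries ℚ
  | 0 => 0
  | n + 1 => G (As n)

lemma stable : ∀ n, ∀ j ≤ n, coeff j (As n) = coeff j (As (n + 1)) := by
  intro n
  induction n with
  | zero =>
    intro j hj
    interval_cases j
    show coeff 0 (0 : PowerSeries ℚ) = coeff 0 (G (As 0))
    rw [coeff_zero_G, map_zero]
  | succ n ih =>
    intro j hj
    exact keyG (fun m hm => ih m (by omega)) j hj

lemma mono : ∀ j n n', j ≤ n → n ≤ n' → coeff j (As n) = coeff j (As n') := by
  intro j n n' hj hn
  induction n' , hn using Nat.le_induction with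
  | base => rfl
  | succ m hm ih => rw [ih, stable m j (by omega)]

noncomputable def Afix : PowerSeries ℚ := PowerSeries.mk fun n => coeff n (As n)

lemma coeff_Afix (n : ℕ) : coeff n Afix = coeff n (As n) := coeff_mk _ _

lemma Afix_fixed : G Afix = Afix := by
  ext n
  have h1 : ∀ m < n, coeff m Afix = coeff m (As n) := by
    intro m hm
    rw [coeff_Afix, mono m m n le_rfl (by omega)]
  calc coeff n (G Afix) = coeff n (G (As n)) := keyG h1 n le_rfl
    _ = coeff n (As (n + 1)) := rfl
    _ = coeff n (As n) := (stable n n le_rfl).symm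
    _ = coeff n Afix := (coeff_Afix n).symm

lemma Afix_const : constantCoeff Afix = 0 := by
  rw [← coeff_zero_eq_constantCoeff, coeff_Afix]
  rfl

lemma Afix_eq : 1 + Afix = PowerSeries.expOf (C (1/2 : ℚ) * X * (2 + Afix)) := by
  have := Afix_fixed
  unfold G at this
  linear_combination -this

-- comp is multiplicative in the first argument
lemma comp_mul {g : PowerSeries ℚ} (hg : constantCoeff g = 0) (f₁ f₂ : PowerSeries ℚ) :
    PowerSeries.comp (f₁ * f₂) g = PowerSeries.comp f₁ g * PowerSeries.comp f₂ g := by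
  ext n
  have ext1 : ∀ i ≤ n, ∀ f : PowerSeries ℚ,
      (∑ k ∈ Finset.range (i + 1), coeff k f * coeff i (g ^ k)) =
        ∑ k ∈ Finset.range (n + 1), coeff k f * coeff i (g ^ k) := by
    intro i hi f
    apply Finset.sum_subset
    · intro k hk
      simp only [Finset.mem_range] at hk ⊢
      omega
    · intro k _ hk
      simp only [Finset.mem_range, not_lt] at hk
      rw [coeff_pow_of_lt hg k i (by omega), mul_zero]
  have hRHS : coeff n (PowerSeries.comp f₁ g * PowerSeries.comp f₂ g) =
      ∑ k ∈ Finset.range (n + 1), ∑ l ∈ Finset.range (n + 1),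
        coeff k f₁ * coeff l f₂ * coeff n (g ^ (k + l)) := by
    rw [coeff_mul]
    calc ∑ p ∈ Finset.HasAntidiagonal.antidiagonal n,
          coeff p.1 (PowerSeries.comp f₁ g) * coeff p.2 (PowerSeries.comp f₂ g)
        = ∑ p ∈ Finset.HasAntidiagonal.antidiagonal n, ∑ k ∈ Finset.range (n + 1), ∑ l ∈ Finset.range (n + 1),
            coeff k f₁ * coeff l f₂ * (coeff p.1 (g ^ k) * coeff p.2 (g ^ l)) := by
          apply Finset.sum_congr rfl
          rintro ⟨i, j⟩ hij
          rw [Finset.HasAntidiagonal.mem_antidiagonal] at hij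
          rw [coeff_comp, coeff_comp, ext1 i (by omega) f₁, ext1 j (by omega) f₂,
            Finset.sum_mul_sum]
          apply Finset.sum_congr rfl; intro k _
          apply Finset.sum_congr rfl; intro l _
          ring
      _ = ∑ k ∈ Finset.range (n + 1), ∑ l ∈ Finset.range (n + 1),
            coeff k f₁ * coeff l f₂ * coeff n (g ^ (k + l)) := by
          rw [Finset.sum_comm]
          apply Finset.sum_congr rfl; intro k _
          rw [Finset.sum_comm]
          apply Finset.sum_congr rfl; intro l _
          rw [← Finset.mul_sum, pow_add, coeff_mul]
  rw [hRHS, coeff_comp]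
  -- now LHS
  calc ∑ m ∈ Finset.range (n + 1), coeff m (f₁ * f₂) * coeff n (g ^ m)
      = ∑ m ∈ Finset.range (n + 1), ∑ p ∈ Finset.HasAntidiagonal.antidiagonal m,
          coeff p.1 f₁ * coeff p.2 f₂ * coeff n (g ^ (p.1 + p.2)) := by
        apply Finset.sum_congr rfl; intro m _
        rw [coeff_mul, Finset.sum_mul]
        apply Finset.sum_congr rfl
        rintro ⟨k, l⟩ hp
        rw [Finset.HasAntidiagonal.mem_antidiagonal] at hp
        rw [hp]
    _ = ∑ p ∈ (Finset.range (n + 1)).biUnion (fun m => Finset.HasAntidiagonal.antidiagonal m),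
          coeff p.1 f₁ * coeff p.2 f₂ * coeff n (g ^ (p.1 + p.2)) := by
        rw [Finset.sum_biUnion]
        intro a _ b _ hab
        apply Finset.disjoint_left.mpr
        intro p hpa hpb
        rw [Finset.HasAntidiagonal.mem_antidiagonal] at hpa hpb
        exact hab (hpa.symm.trans hpb)
    _ = ∑ p ∈ Finset.range (n + 1) ×ˢ Finset.range (n + 1),
          coeff p.1 f₁ * coeff p.2 f₂ * coeff n (g ^ (p.1 + p.2)) := by
        apply Finset.sum_subset
        · intro p hp
          rw [Finset.mem_biUnion] at hp
          obtain ⟨m, hm, hpm⟩ := hp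
          rw [Finset.mem_range] at hm
          rw [Finset.HasAntidiagonal.mem_antidiagonal] at hpm
          rw [Finset.mem_product, Finset.mem_range, Finset.mem_range]
          omega
        · intro p hp hnp
          rw [Finset.mem_product, Finset.mem_range, Finset.mem_range] at hp
          have : n < p.1 + p.2 := by
            by_contra hle
            push_neg at hle
            exact hnp (Finset.mem_biUnion.mpr ⟨p.1 + p.2, Finset.mem_range.mpr (by omega),
              Finset.HasAntidiagonal.mem_antidiagonal.mpr rfl⟩)
          rw [coeff_pow_of_lt hg _ n this, mul_zero]
    _ = ∑ k ∈ Finset.range (n + 1), ∑ l ∈ Finset.range (n + 1),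
          coeff k f₁ * coeff l f₂ * coeff n (g ^ (k + l)) := by
        rw [Finset.sum_product]

lemma expOf_sq {S : PowerSeries ℚ} (hS : constantCoeff S = 0) :
    PowerSeries.expOf S * PowerSeries.expOf S = PowerSeries.expOf (2 * S) := by
  unfold PowerSeries.expOf
  rw [← comp_mul hS]
  have h2 : exp ℚ * exp ℚ = rescale (2 : ℚ) (exp ℚ) := by
    have h := exp_mul_exp_eq_exp_add (1 : ℚ) 1
    rw [rescale_one] at h
    norm_num at h
    exact h
  rw [h2]
  ext n
  rw [coeff_comp, coeff_comp]
  apply Finset.sum_congr rfl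
  intro k _
  rw [coeff_rescale]
  have : ((2 : PowerSeries ℚ) * S) ^ k = C ((2 : ℚ) ^ k) * S ^ k := by
    rw [mul_pow, show (2 : PowerSeries ℚ) = C 2 from (map_ofNat (C) 2).symm, ← map_pow]
  rw [this, coeff_C_mul]
  ring

end Postnikov

open Postnikov in
/-- There is a unique formal power series `A` over `ℚ` with zero constant term
satisfying `1 + A = e^{(x/2)(2+A)}`, and this `A` satisfies `(1+A)^2 = e^{x(2+A)}`. -/
theorem postnikov_functional_equation :
    (∃! A : PowerSeries ℚ, PowerSeries.constantCoeff A = 0 ∧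
        1 + A = PowerSeries.expOf (PowerSeries.C (1/2 : ℚ) * PowerSeries.X * (2 + A))) ∧
    ∀ A : PowerSeries ℚ, PowerSeries.constantCoeff A = 0 →
      1 + A = PowerSeries.expOf (PowerSeries.C (1/2 : ℚ) * PowerSeries.X * (2 + A)) →
      (1 + A) ^ 2 = PowerSeries.expOf (PowerSeries.X * (2 + A)) := by
  constructor
  · refine ⟨Afix, ⟨Afix_const, Afix_eq⟩, ?_⟩
    intro B ⟨hB0, hBeq⟩
    have hBfix : G B = B := by
      unfold G
      linear_combination -hBeq
    have hAfix := Afix_fixed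
    ext n
    induction n using Nat.strong_induction_on with
    | _ n ih =>
      calc coeff n B = coeff n (G B) := by rw [hBfix]
        _ = coeff n (G Afix) := keyG (fun m hm => ih m hm) n le_rfl
        _ = coeff n Afix := by rw [hAfix]
  · intro A hA hEq
    have hS0 : constantCoeff (PowerSeries.C (1/2 : ℚ) * PowerSeries.X * (2 + A)) = 0 := by
      simp [mul_assoc]
    have h2S : (2 : PowerSeries ℚ) * (PowerSeries.C (1/2 : ℚ) * PowerSeries.X * (2 + A)) =
        PowerSeries.X * (2 + A) := by
      rw [show (2 : PowerSeries ℚ) = PowerSeries.C 2 from (map_ofNat (PowerSeries.C) 2).symm,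
        ← mul_assoc, ← mul_assoc, ← map_mul]
      norm_num
    rw [pow_two, hEq, expOf_sq hS0, h2S]
end

section
/- The coefficient of x^n/n! in the formal power series 2 log(1+x)/(2+x) equals (-1)^{n-1} ∑_{i=0}^{n-1} i!(n-1-i)!, for n ≥ 1. -/
open PowerSeries

/-- The formal power series `log(1+x) = ∑_{n≥1} (-1)^{n-1} x^n/n` over `ℚ`. -/
noncomputable def logOnePlusX : PowerSeries ℚ :=
  PowerSeries.mk fun n => if n = 0 then 0 else (-1 : ℚ) ^ (n - 1) / n

noncomputable def Tq (n : ℕ) : ℚ :=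
  ∑ i ∈ Finset.range n, (i.factorial : ℚ) * ((n - 1 - i).factorial : ℚ)

lemma Tq_zero : Tq 0 = 0 := by simp [Tq]

lemma Tq_rec (m : ℕ) : 2 * Tq (m + 1) = (m + 1) * Tq m + 2 * m.factorial := by
  have hb : ∑ i ∈ Finset.range m,
      (((i.factorial : ℚ) * ((m - i).factorial : ℚ)) -
        (((i+1).factorial : ℚ) * ((m - (i+1)).factorial : ℚ))) = (0:ℚ) := by
    rw [Finset.sum_range_sub']
    simp [Nat.sub_self]
  have key : (2:ℚ) * ∑ i ∈ Finset.range m, (i.factorial : ℚ) * ((m - i).factorial : ℚ)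
      = ((m:ℚ)+1) * ∑ i ∈ Finset.range m, (i.factorial : ℚ) * ((m - 1 - i).factorial : ℚ) := by
    rw [Finset.mul_sum, Finset.mul_sum, ← sub_eq_zero, ← Finset.sum_sub_distrib, ← hb]
    apply Finset.sum_congr rfl
    intro i hi
    have hi' : i < m := Finset.mem_range.mp hi
    have hj1 : m - i = (m - 1 - i) + 1 := by omega
    have hj2 : m - (i + 1) = m - 1 - i := by omega
    have hm' : m = i + (m - 1 - i) + 1 := by omega
    have hm : (m : ℚ) = (i : ℚ) + ((m - 1 - i : ℕ) : ℚ) + 1 := by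
      have := congrArg (Nat.cast (R := ℚ)) hm'
      push_cast at this
      linarith
    rw [hj1, hj2, Nat.factorial_succ, Nat.factorial_succ, hm]
    push_cast
    ring
  unfold Tq
  rw [Finset.sum_range_succ]
  simp only [Nat.add_sub_cancel, Nat.sub_self, Nat.factorial_zero, Nat.cast_one, mul_one]
  rw [mul_add, key]

noncomputable def Gq : PowerSeries ℚ :=
  PowerSeries.mk fun n => (-1 : ℚ) ^ (n - 1) * Tq n / n.factorial

lemma main_eq :
    (PowerSeries.C (R := ℚ) 2 + PowerSeries.X) * Gq = PowerSeries.C (R := ℚ) 2 * logOnePlusX := by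
  ext n
  rw [add_mul, map_add, coeff_C_mul, coeff_C_mul]
  cases n with
  | zero =>
    simp [Gq, logOnePlusX, Tq]
  | succ n =>
    rw [coeff_succ_X_mul]
    simp only [Gq, logOnePlusX, coeff_mk, Nat.add_sub_cancel, Nat.succ_ne_zero, if_neg]
    cases n with
    | zero =>
      have h1 : Tq 1 = 1 := by
        have := Tq_rec 0
        rw [Tq_zero] at this
        simp [Nat.factorial] at this
        linarith
      simp [h1, Tq_zero]
    | succ m =>
      have hr := Tq_rec (m + 1)
      have hcast : ((m+1:ℕ):ℚ) + 1 = (m:ℚ) + 2 := by push_cast; ring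
      rw [hcast] at hr
      have hT : Tq (m+1+1) = (((m:ℚ)+2) * Tq (m+1) + 2*(((m+1).factorial:ℕ):ℚ))/2 := by
        linarith
      have h1 : (((m+1).factorial : ℕ) : ℚ) ≠ 0 := by positivity
      have h2 : ((m:ℚ) + 2) ≠ 0 := by positivity
      have hfac : (((m+1+1).factorial : ℕ) : ℚ) = ((m:ℚ)+2) * (((m+1).factorial : ℕ) : ℚ) := by
        rw [Nat.factorial_succ]; push_cast; ring
      simp only [Nat.add_sub_cancel, pow_succ, if_false]
      rw [hT, hfac]
      push_cast
      field_simp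
      ring

/-- For `n ≥ 1`, the coefficient of `x^n/n!` in `2·log(1+x)/(2+x)` equals
`(-1)^{n-1} ∑_{i=0}^{n-1} i!(n-1-i)!`. -/
theorem coeff_two_log_div (n : ℕ) (hn : 1 ≤ n) :
    (n.factorial : ℚ) * PowerSeries.coeff (R := ℚ) n
        (PowerSeries.C (R := ℚ) 2 * logOnePlusX * (PowerSeries.C (R := ℚ) 2 + PowerSeries.X)⁻¹) =
      (-1 : ℚ) ^ (n - 1) *
        ∑ i ∈ Finset.range n, (i.factorial : ℚ) * ((n - 1 - i).factorial : ℚ) := by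
  have hunit : constantCoeff (R := ℚ) (PowerSeries.C (R := ℚ) 2 + PowerSeries.X) ≠ 0 := by simp
  have hg : PowerSeries.C (R := ℚ) 2 * logOnePlusX * (PowerSeries.C (R := ℚ) 2 + PowerSeries.X)⁻¹ = Gq := by
    rw [← main_eq, mul_comm (PowerSeries.C (R := ℚ) 2 + PowerSeries.X) Gq, mul_assoc,
      PowerSeries.mul_inv_cancel _ hunit, mul_one]
  rw [hg]
  simp only [Gq, coeff_mk]
  have hf : (n.factorial : ℚ) ≠ 0 := by positivity
  rw [show (∑ i ∈ Finset.range n, (i.factorial : ℚ) * ((n - 1 - i).factorial : ℚ)) = Tq n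
      from rfl]
  field_simp
end

section
/- As formal power series in u and v over ℚ, ∑_{i,j≥0} (i! j!/(i+j+1)!) u^i v^j = (log(1-u) + log(1-v))/(uv - u - v). -/
open PowerSeries

/-- `log(1-u) = -∑_{n≥1} u^n/n` as a formal power series over `ℚ`. -/
noncomputable def logOneMinus : PowerSeries ℚ :=
  PowerSeries.mk fun n => if n = 0 then 0 else -1 / (n : ℚ)

lemma fact_key (m k : ℕ) :
    ((m.factorial : ℚ) * k.factorial / (m + k + 1).factorial)
      - (m.factorial : ℚ) * (k+1).factorial / (m + (k+1) + 1).factorial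
      - ((m+1).factorial : ℚ) * k.factorial / ((m+1) + k + 1).factorial = 0 := by
  have h1 : (m + (k+1) + 1) = (m + k + 1) + 1 := by ring
  have h2 : ((m+1) + k + 1) = (m + k + 1) + 1 := by ring
  rw [h1, h2, Nat.factorial_succ (m+k+1), Nat.factorial_succ m, Nat.factorial_succ k]
  have hA : ((m + k + 1).factorial : ℚ) ≠ 0 := Nat.cast_ne_zero.2 (Nat.factorial_ne_zero _)
  have hB : ((m + k + 1 + 1 : ℕ) : ℚ) ≠ 0 := Nat.cast_ne_zero.2 (by omega)
  field_simp
  push_cast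
  ring

/-- As formal power series in two variables `u, v` over `ℚ` (realized as
`ℚ⟦u⟧⟦v⟧`, with `u = C X` and `v = X`),
`∑_{i,j≥0} (i! j!/(i+j+1)!) u^i v^j = (log(1-u) + log(1-v))/(uv - u - v)`,
stated in cross-multiplied form (equivalent, since `ℚ⟦u⟧⟦v⟧` is a domain and
`uv - u - v ≠ 0`). -/
theorem double_factorial_gf :
    (PowerSeries.mk fun j : ℕ => PowerSeries.mk fun i : ℕ =>
        ((i.factorial : ℚ) * (j.factorial : ℚ) / ((i + j + 1).factorial : ℚ))) *
      (PowerSeries.C (R := PowerSeries ℚ) PowerSeries.X * PowerSeries.X -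
        PowerSeries.C (R := PowerSeries ℚ) PowerSeries.X - PowerSeries.X) =
    PowerSeries.C (R := PowerSeries ℚ) logOneMinus +
      (PowerSeries.mk fun n : ℕ =>
        if n = 0 then 0 else PowerSeries.C (R := ℚ) (-1 / (n : ℚ))) := by
  set F := (PowerSeries.mk fun j : ℕ => PowerSeries.mk fun i : ℕ =>
      ((i.factorial : ℚ) * (j.factorial : ℚ) / ((i + j + 1).factorial : ℚ))) with hF
  refine PowerSeries.ext fun j => ?_
  rw [mul_sub, mul_sub, ← mul_assoc]
  rcases j with _ | k
  · simp only [map_sub, map_add, coeff_zero_mul_X, PowerSeries.coeff_mul_C,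
      coeff_zero_C, coeff_mk, if_pos rfl]
    rw [hF]
    refine PowerSeries.ext fun i => ?_
    rcases i with _ | m
    · simp [logOneMinus]
    · simp only [zero_sub, sub_zero, add_zero, map_neg, coeff_succ_mul_X, coeff_mk,
        logOneMinus, Nat.succ_ne_zero, if_neg]
      norm_num [Nat.factorial_succ]
      have hm : ((m.factorial : ℚ)) ≠ 0 := Nat.cast_ne_zero.2 (Nat.factorial_ne_zero m)
      have hm1 : ((m : ℚ) + 1) ≠ 0 := Nat.cast_add_one_ne_zero m
      field_simp
  · simp only [map_sub, map_add, coeff_succ_mul_X, PowerSeries.coeff_mul_C,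
      coeff_C, coeff_mk, Nat.succ_ne_zero, if_neg, if_false]
    rw [hF]
    simp only [coeff_mk]
    refine PowerSeries.ext fun i => ?_
    rcases i with _ | m
    · simp only [map_sub, coeff_zero_mul_X, coeff_mk, coeff_zero_C, zero_sub]
      rw [Nat.zero_add, Nat.factorial_zero, Nat.factorial_succ]
      push_cast
      have : ((k.factorial : ℚ)) ≠ 0 := Nat.cast_ne_zero.2 (Nat.factorial_ne_zero _)
      field_simp
      ring_nf
      simp only [coeff_C, if_pos rfl]
      field_simp
      rw [if_pos trivial, add_comm (k:ℚ) 1, neg_mul, one_div, inv_mul_cancel₀ (by positivity)]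
    · simp only [map_sub, coeff_succ_mul_X, coeff_mk, coeff_C, Nat.succ_ne_zero, if_neg,
        if_false]
      simp only [map_add, map_zero, coeff_C, Nat.succ_ne_zero, if_false, zero_add]
      linarith [fact_key m k]
end

section
/- Substituting e^x - 1 for x in 2 log(1+x)/(2+x) yields the series 2x/(e^x+1); hence the Genocchi numbers, defined as n! times the x^n coefficients of 2x/(e^x+1), are integers. -/
open PowerSeries

namespace GenocchiAux


open Finset Polynomial

lemma coeff_pow_eq_zero {G : ℚ⟦X⟧} (hG : PowerSeries.constantCoeff G = 0) {k n : ℕ} (h : n < k) :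
    PowerSeries.coeff n (G ^ k) = 0 := by
  have hx : (PowerSeries.X : ℚ⟦X⟧) ^ k ∣ G ^ k :=
    pow_dvd_pow_of_dvd (PowerSeries.X_dvd_iff.mpr hG) k
  exact PowerSeries.X_pow_dvd_iff.mp hx n h

lemma coeff_comp {G : ℚ⟦X⟧} (f : ℚ⟦X⟧) (n : ℕ) :
    PowerSeries.coeff n (f.comp G) =
      ∑ k ∈ Finset.range (n + 1), PowerSeries.coeff k f * PowerSeries.coeff n (G ^ k) := by
  simp [PowerSeries.comp]

lemma coeff_comp_eval {G : ℚ⟦X⟧} (hG : PowerSeries.constantCoeff G = 0)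
    (f : ℚ⟦X⟧) {n N : ℕ} (hn : n < N) :
    PowerSeries.coeff n (f.comp G) =
      PowerSeries.coeff n ((PowerSeries.trunc N f).eval₂ (PowerSeries.C (R := ℚ)) G) := by
  rw [coeff_comp, eval₂_trunc_eq_sum_range, map_sum]
  simp only [PowerSeries.coeff_C_mul]
  refine Finset.sum_subset (Finset.range_subset_range.mpr hn) fun k _ hk => ?_
  rw [Finset.mem_range, not_lt] at hk
  rw [coeff_pow_eq_zero hG (by omega), mul_zero]

lemma coeff_eval_congr {G : ℚ⟦X⟧} (hG : PowerSeries.constantCoeff G = 0)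
    {n N : ℕ} (hn : n < N) (p : ℚ[X]) :
    PowerSeries.coeff n (p.eval₂ (PowerSeries.C (R := ℚ)) G) =
      PowerSeries.coeff n ((PowerSeries.trunc N (p : ℚ⟦X⟧)).eval₂ (PowerSeries.C (R := ℚ)) G) := by
  set q : ℚ[X] := PowerSeries.trunc N (p : ℚ⟦X⟧) with hq
  have hdvd : (Polynomial.X : ℚ[X]) ^ N ∣ p - q := by
    rw [Polynomial.X_pow_dvd_iff]
    intro d hd
    simp [hq, Polynomial.coeff_sub, PowerSeries.coeff_trunc, hd, Polynomial.coeff_coe]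
  obtain ⟨r, hr⟩ := hdvd
  have hp : p = q + Polynomial.X ^ N * r := by rw [← hr]; ring
  rw [hp, eval₂_add, eval₂_mul, eval₂_X_pow, map_add]
  have : PowerSeries.coeff n (G ^ N * r.eval₂ (PowerSeries.C (R := ℚ)) G) = 0 := by
    have hx : (PowerSeries.X : ℚ⟦X⟧) ^ N ∣ G ^ N * r.eval₂ (PowerSeries.C (R := ℚ)) G :=
      Dvd.dvd.mul_right (pow_dvd_pow_of_dvd (PowerSeries.X_dvd_iff.mpr hG) N) _
    exact PowerSeries.X_pow_dvd_iff.mp hx n hn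
  rw [this, add_zero]

lemma comp_mul {G : ℚ⟦X⟧} (hG : PowerSeries.constantCoeff G = 0) (f₁ f₂ : ℚ⟦X⟧) :
    (f₁ * f₂).comp G = f₁.comp G * f₂.comp G := by
  ext n
  have hn : n < n + 1 := Nat.lt_succ_self n
  rw [coeff_comp_eval hG _ hn]
  have key : PowerSeries.coeff n ((PowerSeries.trunc (n+1) (f₁ * f₂)).eval₂ (PowerSeries.C (R := ℚ)) G)
      = PowerSeries.coeff n
        (((PowerSeries.trunc (n+1) f₁) * (PowerSeries.trunc (n+1) f₂)).eval₂ (PowerSeries.C (R := ℚ)) G) := by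
    rw [coeff_eval_congr hG hn (PowerSeries.trunc (n+1) f₁ * PowerSeries.trunc (n+1) f₂)]
    congr 2
    rw [Polynomial.coe_mul, PowerSeries.trunc_trunc_mul_trunc]
  rw [key, eval₂_mul]
  rw [PowerSeries.coeff_mul, PowerSeries.coeff_mul]
  refine Finset.sum_congr rfl fun x hx => ?_
  rw [Finset.HasAntidiagonal.mem_antidiagonal] at hx
  rw [coeff_comp_eval hG f₁ (show x.1 < n + 1 by omega),
    coeff_comp_eval hG f₂ (show x.2 < n + 1 by omega)]

lemma comp_C {G : ℚ⟦X⟧} (a : ℚ) : (PowerSeries.C a).comp G = PowerSeries.C a := by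
  ext n
  rw [coeff_comp, Finset.sum_eq_single 0]
  · simp [PowerSeries.coeff_C]
  · intro k _ hk
    simp [PowerSeries.coeff_C, hk]
  · simp

lemma comp_one {G : ℚ⟦X⟧} : (1 : ℚ⟦X⟧).comp G = 1 := by
  have := comp_C (G := G) 1
  simpa using this

lemma comp_X {G : ℚ⟦X⟧} (hG : PowerSeries.constantCoeff G = 0) :
    (PowerSeries.X : ℚ⟦X⟧).comp G = G := by
  ext n
  rw [coeff_comp]
  rcases Nat.eq_zero_or_pos n with h | h
  · subst h
    simp [PowerSeries.coeff_zero_eq_constantCoeff, hG]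
  · rw [Finset.sum_eq_single 1]
    · simp
    · intro k _ hk
      simp [PowerSeries.coeff_X, hk]
    · intro h1
      simp at h1
      omega

lemma comp_add {G : ℚ⟦X⟧} (f₁ f₂ : ℚ⟦X⟧) : (f₁ + f₂).comp G = f₁.comp G + f₂.comp G := by
  ext n
  simp [coeff_comp, add_mul, Finset.sum_add_distrib]


lemma eval₂_derivative {G : ℚ⟦X⟧} (p : ℚ[X]) :
    PowerSeries.derivative ℚ (p.eval₂ (PowerSeries.C (R := ℚ)) G)
      = (Polynomial.derivative p).eval₂ (PowerSeries.C (R := ℚ)) G * PowerSeries.derivative ℚ G := by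
  induction p using Polynomial.induction_on' with
  | add p q hp hq =>
      rw [eval₂_add, map_add, hp, hq, Polynomial.derivative_add, eval₂_add, add_mul]
  | monomial n a =>
      rw [eval₂_monomial, Polynomial.derivative_monomial, eval₂_monomial]
      rw [Derivation.leibniz, PowerSeries.derivative_C, smul_zero, add_zero, smul_eq_mul]
      rw [Derivation.leibniz_pow, smul_eq_mul, nsmul_eq_mul, map_mul, map_natCast]
      ring

lemma derivative_comp {G : ℚ⟦X⟧} (hG : PowerSeries.constantCoeff G = 0) (f : ℚ⟦X⟧) :
    PowerSeries.derivative ℚ (f.comp G)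
      = (PowerSeries.derivative ℚ f).comp G * PowerSeries.derivative ℚ G := by
  ext n
  have h1 : PowerSeries.coeff n (PowerSeries.derivative ℚ (f.comp G))
      = PowerSeries.coeff n (PowerSeries.derivative ℚ
          ((PowerSeries.trunc (n+2) f).eval₂ (PowerSeries.C (R := ℚ)) G)) := by
    rw [PowerSeries.coeff_derivative, PowerSeries.coeff_derivative,
      coeff_comp_eval hG f (show n+1 < n+2 by omega)]
  rw [h1, eval₂_derivative, ← PowerSeries.trunc_derivative f (n+1)]
  rw [PowerSeries.coeff_mul, PowerSeries.coeff_mul]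
  refine Finset.sum_congr rfl fun x hx => ?_
  rw [Finset.HasAntidiagonal.mem_antidiagonal] at hx
  rw [← coeff_comp_eval hG _ (show x.1 < n+1 by omega)]

lemma derivative_log_eq :
    PowerSeries.derivative ℚ logOnePlusX = PowerSeries.mk fun n => (-1 : ℚ) ^ n := by
  ext n
  rw [PowerSeries.coeff_derivative]
  simp only [logOnePlusX, PowerSeries.coeff_mk, Nat.succ_ne_zero, if_false, Nat.add_sub_cancel]
  have : ((n : ℚ) + 1) ≠ 0 := by positivity
  field_simp
  norm_num

lemma one_add_X_mul_derivative_log :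
    (1 + PowerSeries.X) * PowerSeries.derivative ℚ logOnePlusX = 1 := by
  rw [derivative_log_eq]
  ext n
  rw [add_mul, one_mul, map_add]
  cases n with
  | zero => simp
  | succ m =>
      rw [PowerSeries.coeff_succ_X_mul]
      simp [pow_succ]

lemma constantCoeff_comp {G : ℚ⟦X⟧} (f : ℚ⟦X⟧) (hf : PowerSeries.coeff 0 f = 0) :
    PowerSeries.constantCoeff (f.comp G) = 0 := by
  rw [← PowerSeries.coeff_zero_eq_constantCoeff_apply, coeff_comp]
  simp [hf]

lemma comp_log {u : ℚ⟦X⟧} (hu : PowerSeries.constantCoeff u = 1) (a : ℚ)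
    (hd : PowerSeries.derivative ℚ u = PowerSeries.C a * u) :
    logOnePlusX.comp (u - 1) = PowerSeries.C a * PowerSeries.X := by
  have hw : PowerSeries.constantCoeff (u - 1) = 0 := by
    rw [map_sub, hu, map_one, sub_self]
  have h2 : u * ((PowerSeries.derivative ℚ logOnePlusX).comp (u - 1)) = 1 := by
    have h3 := (comp_mul hw (1 + PowerSeries.X) (PowerSeries.derivative ℚ logOnePlusX)).symm
    rw [one_add_X_mul_derivative_log, comp_one, comp_add, comp_one, comp_X hw] at h3
    have h4 : (1 : ℚ⟦X⟧) + (u - 1) = u := by ring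
    rw [h4] at h3
    exact h3
  have h4 : PowerSeries.derivative ℚ (logOnePlusX.comp (u - 1)) = PowerSeries.C a := by
    have hdw : PowerSeries.derivative ℚ (u - 1) = PowerSeries.C a * u := by
      rw [map_sub, Derivation.map_one_eq_zero, sub_zero, hd]
    rw [derivative_comp hw, hdw,
      show (PowerSeries.derivative ℚ logOnePlusX).comp (u - 1) * (PowerSeries.C a * u)
        = PowerSeries.C a * (u * (PowerSeries.derivative ℚ logOnePlusX).comp (u - 1)) by ring,
      h2, mul_one]
  have h5 : PowerSeries.derivative ℚ (PowerSeries.C a * PowerSeries.X) = PowerSeries.C a := by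
    rw [Derivation.leibniz, PowerSeries.derivative_C, smul_zero, add_zero, smul_eq_mul,
      PowerSeries.derivative_X, mul_one]
  refine PowerSeries.derivative.ext (by rw [h4, h5]) ?_
  rw [constantCoeff_comp _ (by simp [logOnePlusX])]
  simp

lemma derivative_rescale_exp (a : ℚ) :
    PowerSeries.derivative ℚ (PowerSeries.rescale a (exp ℚ))
      = PowerSeries.C a * PowerSeries.rescale a (exp ℚ) := by
  ext n
  rw [PowerSeries.coeff_derivative, PowerSeries.coeff_C_mul, PowerSeries.coeff_rescale,
    PowerSeries.coeff_rescale, PowerSeries.coeff_exp, PowerSeries.coeff_exp]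
  simp only [Algebra.algebraMap_self, RingHom.id_apply]
  rw [Nat.factorial_succ]
  have h1 : ((n : ℚ) + 1) ≠ 0 := by positivity
  have h2 : ((n.factorial : ℚ)) ≠ 0 := by exact_mod_cast n.factorial_ne_zero
  field_simp
  push_cast
  ring

lemma derivative_exp' :
    PowerSeries.derivative ℚ (exp ℚ) = PowerSeries.C (1 : ℚ) * exp ℚ := by
  have := derivative_rescale_exp 1
  rwa [PowerSeries.rescale_one, RingHom.id_apply] at this


lemma hg0 : PowerSeries.constantCoeff (exp ℚ - 1) = 0 := by
  rw [map_sub, PowerSeries.constantCoeff_exp, map_one, sub_self]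

lemma comp_log_exp : logOnePlusX.comp (exp ℚ - 1) = PowerSeries.X := by
  have := comp_log PowerSeries.constantCoeff_exp 1 derivative_exp'
  simpa using this

lemma constantCoeff_exp_add_one : PowerSeries.constantCoeff (exp ℚ + 1) ≠ 0 := by
  rw [map_add, PowerSeries.constantCoeff_exp, map_one]
  norm_num

lemma comp_inv_two_add_X :
    ((PowerSeries.C (2 : ℚ) + PowerSeries.X)⁻¹).comp (exp ℚ - 1) = (exp ℚ + 1)⁻¹ := by
  have hc2 : PowerSeries.constantCoeff (PowerSeries.C (2 : ℚ) + PowerSeries.X) ≠ 0 := by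
    simp
  have hinv : (PowerSeries.C (2 : ℚ) + PowerSeries.X) * (PowerSeries.C (2 : ℚ) + PowerSeries.X)⁻¹ = 1 :=
    PowerSeries.mul_inv_cancel _ hc2
  have h1 : ((PowerSeries.C (2 : ℚ) + PowerSeries.X).comp (exp ℚ - 1))
      * (((PowerSeries.C (2 : ℚ) + PowerSeries.X)⁻¹).comp (exp ℚ - 1)) = 1 := by
    rw [← comp_mul hg0, hinv, comp_one]
  have h2 : (PowerSeries.C (2 : ℚ) + PowerSeries.X).comp (exp ℚ - 1) = exp ℚ + 1 := by
    rw [comp_add, comp_C, comp_X hg0, show (PowerSeries.C (R := ℚ)) 2 = 2 from map_ofNat _ 2]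
    ring
  rw [h2] at h1
  exact (PowerSeries.eq_inv_iff_mul_eq_one constantCoeff_exp_add_one).mpr (by rw [mul_comm]; exact h1)

lemma part1 :
    (PowerSeries.C (2 : ℚ) * logOnePlusX * (PowerSeries.C (2 : ℚ) + PowerSeries.X)⁻¹).comp (exp ℚ - 1)
      = PowerSeries.C (2 : ℚ) * PowerSeries.X * (exp ℚ + 1)⁻¹ := by
  rw [comp_mul hg0, comp_mul hg0, comp_C, comp_log_exp, comp_inv_two_add_X]

def IsEgfInt (f : ℚ⟦X⟧) : Prop :=
  ∀ n : ℕ, ∃ m : ℤ, (n.factorial : ℚ) * PowerSeries.coeff n f = m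

lemma isEgfInt_mul {f h : ℚ⟦X⟧} (hf : IsEgfInt f) (hh : IsEgfInt h) : IsEgfInt (f * h) := by
  intro n
  choose F hF using hf
  choose H hH using hh
  refine ⟨∑ x ∈ Finset.HasAntidiagonal.antidiagonal n, (n.choose x.2 : ℤ) * F x.1 * H x.2, ?_⟩
  rw [PowerSeries.coeff_mul, Finset.mul_sum]
  push_cast
  refine Finset.sum_congr rfl fun x hx => ?_
  rw [Finset.HasAntidiagonal.mem_antidiagonal] at hx
  have hfact : (n.factorial : ℚ) = (n.choose x.2 : ℚ) * x.1.factorial * x.2.factorial := by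
    rw [← hx]
    exact_mod_cast (Nat.add_choose_mul_factorial_mul_factorial x.1 x.2).symm
  rw [hfact, ← hF, ← hH]
  ring

lemma isEgfInt_one : IsEgfInt 1 := by
  intro n
  refine ⟨if n = 0 then 1 else 0, ?_⟩
  by_cases h : n = 0 <;> simp [PowerSeries.coeff_one, h]

lemma isEgfInt_pow {f : ℚ⟦X⟧} (hf : IsEgfInt f) (k : ℕ) : IsEgfInt (f ^ k) := by
  induction k with
  | zero => simpa using isEgfInt_one
  | succ m ih => rw [pow_succ]; exact isEgfInt_mul ih hf

lemma isEgfInt_g : IsEgfInt (exp ℚ - 1) := by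
  intro n
  refine ⟨if n = 0 then 0 else 1, ?_⟩
  rw [map_sub, PowerSeries.coeff_exp, PowerSeries.coeff_one]
  rcases Nat.eq_zero_or_pos n with h | h
  · subst h; simp
  · have hn : n ≠ 0 := by omega
    have : ((n.factorial : ℚ)) ≠ 0 := by exact_mod_cast n.factorial_ne_zero
    simp only [hn, if_false, Algebra.algebraMap_self, RingHom.id_apply]
    field_simp
    simp

lemma inv_two_add_X_eq :
    (PowerSeries.C (2 : ℚ) + PowerSeries.X)⁻¹
      = PowerSeries.mk fun k => (-1 : ℚ) ^ k / 2 ^ (k + 1) := by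
  have hc2 : PowerSeries.constantCoeff (PowerSeries.C (2 : ℚ) + PowerSeries.X) ≠ 0 := by simp
  symm
  rw [PowerSeries.eq_inv_iff_mul_eq_one hc2]
  ext n
  rw [mul_add, map_add, PowerSeries.coeff_mul_C, mul_comm _ PowerSeries.X]
  cases n with
  | zero =>
      simp only [PowerSeries.coeff_zero_eq_constantCoeff, map_mul]
      simp
  | succ m =>
      rw [PowerSeries.coeff_succ_X_mul, PowerSeries.coeff_mk, PowerSeries.coeff_mk,
        PowerSeries.coeff_one]
      simp only [Nat.succ_ne_zero, if_false]
      have : (2 : ℚ) ^ (m + 2) ≠ 0 := by positivity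
      field_simp
      ring

lemma repA (n : ℕ) :
    ∃ P : ℤ, (2 ^ (n - 1) : ℚ) * (n.factorial : ℚ)
        * PowerSeries.coeff n (PowerSeries.C (2 : ℚ) * PowerSeries.X * (exp ℚ + 1)⁻¹) = P := by
  cases n with
  | zero =>
      refine ⟨0, ?_⟩
      simp [PowerSeries.coeff_zero_eq_constantCoeff, map_mul]
  | succ m =>
      have hcoeff : PowerSeries.coeff (m + 1)
          (PowerSeries.C (2 : ℚ) * PowerSeries.X * (exp ℚ + 1)⁻¹)
          = 2 * PowerSeries.coeff m ((exp ℚ + 1)⁻¹) := by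
        rw [mul_assoc, PowerSeries.coeff_C_mul, PowerSeries.coeff_succ_X_mul]
      choose s hs using fun k => isEgfInt_pow isEgfInt_g k m
      refine ⟨(m + 1) * ∑ k ∈ Finset.range (m + 1), (-1) ^ k * 2 ^ (m - k) * s k, ?_⟩
      rw [hcoeff, ← comp_inv_two_add_X, coeff_comp, inv_two_add_X_eq]
      simp only [PowerSeries.coeff_mk, Nat.add_sub_cancel]
      push_cast
      rw [Finset.mul_sum, Finset.mul_sum, Finset.mul_sum]
      refine Finset.sum_congr rfl fun k hk => ?_
      rw [Finset.mem_range] at hk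
      rw [← hs k, Nat.factorial_succ, ← pow_sub_mul_pow (2 : ℚ) (show k ≤ m by omega)]
      have h3 : (2 : ℚ) ^ (k + 1) ≠ 0 := by positivity
      push_cast
      field_simp
      ring


noncomputable def F₂ : ℚ⟦X⟧ := PowerSeries.mk fun k => (-1 : ℚ) ^ k / (k + 1)

lemma X_mul_F₂ : PowerSeries.X * F₂ = logOnePlusX := by
  ext n
  cases n with
  | zero => simp [F₂, logOnePlusX]
  | succ m =>
      rw [PowerSeries.coeff_succ_X_mul]
      simp only [F₂, logOnePlusX, PowerSeries.coeff_mk, Nat.succ_ne_zero, if_false,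
        Nat.add_sub_cancel]
      push_cast
      ring

lemma constantCoeff_rescale_exp :
    PowerSeries.constantCoeff (PowerSeries.rescale 2 (exp ℚ)) = 1 := by
  rw [← PowerSeries.coeff_zero_eq_constantCoeff_apply, PowerSeries.coeff_rescale]
  simp [PowerSeries.coeff_exp]

lemma hg20 : PowerSeries.constantCoeff (PowerSeries.rescale 2 (exp ℚ) - 1) = 0 := by
  rw [map_sub, constantCoeff_rescale_exp, map_one, sub_self]

lemma comp_log_exp2 :
    logOnePlusX.comp (PowerSeries.rescale 2 (exp ℚ) - 1)
      = PowerSeries.C (2 : ℚ) * PowerSeries.X :=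
  comp_log constantCoeff_rescale_exp 2 (derivative_rescale_exp 2)

lemma key_g2 :
    (PowerSeries.rescale 2 (exp ℚ) - 1) * (F₂.comp (PowerSeries.rescale 2 (exp ℚ) - 1))
      = PowerSeries.C (2 : ℚ) * PowerSeries.X := by
  have h := comp_mul hg20 PowerSeries.X F₂
  rw [X_mul_F₂, comp_X hg20] at h
  rw [← h, comp_log_exp2]

lemma exp_sq : exp ℚ * exp ℚ = PowerSeries.rescale 2 (exp ℚ) := by
  have h := PowerSeries.exp_pow_eq_rescale_exp (A := ℚ) 2
  rw [pow_two] at h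
  rw [h]
  norm_num

lemma repB_identity :
    PowerSeries.C (2 : ℚ) * PowerSeries.X * (exp ℚ + 1)⁻¹
      = (exp ℚ - 1) * (F₂.comp (PowerSeries.rescale 2 (exp ℚ) - 1)) := by
  have hne : (exp ℚ + 1 : ℚ⟦X⟧) ≠ 0 := by
    intro h
    exact constantCoeff_exp_add_one (by rw [h, map_zero])
  apply mul_left_cancel₀ hne
  have h1 : (exp ℚ + 1) * (PowerSeries.C (2 : ℚ) * PowerSeries.X * (exp ℚ + 1)⁻¹)
      = PowerSeries.C (2 : ℚ) * PowerSeries.X := by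
    rw [show (exp ℚ + 1) * (PowerSeries.C (2 : ℚ) * PowerSeries.X * (exp ℚ + 1)⁻¹)
        = PowerSeries.C (2 : ℚ) * PowerSeries.X * ((exp ℚ + 1) * (exp ℚ + 1)⁻¹) by ring,
      PowerSeries.mul_inv_cancel _ constantCoeff_exp_add_one, mul_one]
  rw [h1, show (exp ℚ + 1) * ((exp ℚ - 1) * (F₂.comp (PowerSeries.rescale 2 (exp ℚ) - 1)))
      = (exp ℚ * exp ℚ - 1) * (F₂.comp (PowerSeries.rescale 2 (exp ℚ) - 1)) by ring,
    exp_sq, key_g2]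

lemma g2_pow_coeff (k j : ℕ) :
    PowerSeries.coeff j ((PowerSeries.rescale 2 (exp ℚ) - 1) ^ k)
      = 2 ^ j * PowerSeries.coeff j ((exp ℚ - 1) ^ k) := by
  have h : (PowerSeries.rescale 2 (exp ℚ) - 1) ^ k
      = PowerSeries.rescale 2 ((exp ℚ - 1) ^ k) := by
    rw [map_pow, map_sub, map_one]
  rw [h, PowerSeries.coeff_rescale]

lemma repB (n : ℕ) :
    ∃ (Q : ℕ) (R : ℤ), Odd Q ∧
      (Q : ℚ) * ((n.factorial : ℚ)
        * PowerSeries.coeff n (PowerSeries.C (2 : ℚ) * PowerSeries.X * (exp ℚ + 1)⁻¹)) = R := by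
  classical
  let v : ℕ → ℕ := fun k => (k + 1).factorization 2
  let q : ℕ → ℕ := fun k => (k + 1) / 2 ^ v k
  let Q : ℕ := ∏ k ∈ Finset.range (n + 1), q k
  have hqodd : ∀ k, Odd (q k) := by
    intro k
    have h2 : ¬ 2 ∣ q k := Nat.not_dvd_ordCompl Nat.prime_two (Nat.succ_ne_zero k)
    rw [Nat.odd_iff]
    omega
  have hQodd : Odd Q := by
    refine Finset.prod_induction q Odd (fun a b ha hb => ha.mul hb) odd_one
      (fun k _ => hqodd k)
  -- integer data
  choose E hE using isEgfInt_g
  choose s hs using fun (j k : ℕ) => isEgfInt_pow isEgfInt_g k j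
  refine ⟨Q, ∑ x ∈ Finset.HasAntidiagonal.antidiagonal n, ∑ k ∈ Finset.range (x.2 + 1),
    (n.choose x.2 : ℤ) * E x.1 * (-1) ^ k * (Q / q k : ℕ) * 2 ^ (x.2 - v k) * s x.2 k,
    hQodd, ?_⟩
  rw [repB_identity, PowerSeries.coeff_mul]
  push_cast
  simp only [coeff_comp, F₂, PowerSeries.coeff_mk, g2_pow_coeff, Finset.mul_sum]
  refine Finset.sum_congr rfl fun x hx => ?_
  rw [Finset.HasAntidiagonal.mem_antidiagonal] at hx
  refine Finset.sum_congr rfl fun k hk => ?_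
  rw [Finset.mem_range] at hk
  -- facts about q, v
  have hvk : v k ≤ k := by
    have h1 : 2 ^ v k ∣ k + 1 := Nat.ordProj_dvd (k + 1) 2
    have h2 : 2 ^ v k ≤ k + 1 := Nat.le_of_dvd (Nat.succ_pos k) h1
    have h3 : k + 1 < 2 ^ (k + 1) := Nat.lt_two_pow_self
    have := lt_of_le_of_lt h2 h3
    have := (Nat.pow_lt_pow_iff_right (by norm_num : 1 < 2)).mp this
    omega
  have hkj : k ≤ x.2 := by omega
  have hkn : k ≤ n := by omega
  have hqQ : q k ∣ Q := by
    exact Finset.dvd_prod_of_mem q (Finset.mem_range.mpr (by omega))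
  have hqv : (q k : ℚ) * 2 ^ v k = (k + 1 : ℚ) := by
    have h := Nat.ordProj_mul_ordCompl_eq_self (k + 1) 2
    have h2 : q k * 2 ^ v k = k + 1 := by rw [mul_comm]; exact h
    exact_mod_cast congrArg (Nat.cast : ℕ → ℚ) h2
  have hQsplit : (Q : ℚ) = (q k : ℚ) * ((Q / q k : ℕ) : ℚ) := by
    rw [← Nat.cast_mul, Nat.mul_div_cancel' hqQ]
  have h2j : (2 : ℚ) ^ (x.2 - v k) * 2 ^ v k = 2 ^ x.2 :=
    pow_sub_mul_pow 2 (le_trans hvk hkj)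
  -- factorial split
  have hfact : (n.factorial : ℚ) = (n.choose x.2 : ℚ) * x.1.factorial * x.2.factorial := by
    rw [← hx]
    exact_mod_cast (Nat.add_choose_mul_factorial_mul_factorial x.1 x.2).symm
  have hk1 : ((k : ℚ) + 1) ≠ 0 := by positivity
  have h2v : ((2 : ℚ) ^ v k) ≠ 0 := by positivity
  have hqpos : 0 < q k := Nat.pos_of_ne_zero (by
    intro h0
    have := hqodd k
    rw [h0] at this
    exact (Nat.not_odd_iff_even.mpr Even.zero) this)
  have hqne : ((q k : ℚ)) ≠ 0 := by exact_mod_cast hqpos.ne'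
  have hx1ne : ((x.1.factorial : ℚ)) ≠ 0 := by exact_mod_cast x.1.factorial_ne_zero
  rw [hfact]
  rw [← hE x.1, ← hs x.2 k]
  rw [hQsplit, ← hqv, ← h2j]
  field_simp
  rw [Int.ofNat_ediv_ofNat, Int.cast_natCast]
  ring

end GenocchiAux

open GenocchiAux in
/-- Substituting `e^x - 1` for `x` in `2·log(1+x)/(2+x)` yields `2x/(e^x+1)`;
hence the Genocchi numbers (the EGF coefficients of `2x/(e^x+1)`) are integers. -/
theorem genocchi_integral :
    PowerSeries.comp
        (PowerSeries.C (2 : ℚ) * logOnePlusX * (PowerSeries.C (2 : ℚ) + PowerSeries.X)⁻¹)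
        (exp ℚ - 1) =
      PowerSeries.C (2 : ℚ) * PowerSeries.X * (exp ℚ + 1)⁻¹ ∧
    ∀ n : ℕ, ∃ m : ℤ,
      (n.factorial : ℚ) *
          PowerSeries.coeff n (PowerSeries.C (2 : ℚ) * PowerSeries.X * (exp ℚ + 1)⁻¹) =
        (m : ℚ) := by
  refine ⟨part1, fun n => ?_⟩
  obtain ⟨P, hP⟩ := repA n
  obtain ⟨Q, R, hQodd, hR⟩ := repB n
  have key : (Q : ℚ) * P = 2 ^ (n - 1) * R := by
    rw [← hP, ← hR]; ring
  have keyZ : (Q : ℤ) * P = 2 ^ (n - 1) * R := by exact_mod_cast key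
  have hcop : Nat.Coprime (2 ^ (n - 1)) Q :=
    Nat.Coprime.pow_left _ (Nat.coprime_two_left.mpr hQodd)
  have hcopZ : IsCoprime ((2 : ℤ) ^ (n - 1)) (Q : ℤ) := by
    have := Nat.isCoprime_iff_coprime.mpr hcop
    push_cast at this
    exact this
  have hdvd : ((2 : ℤ) ^ (n - 1)) ∣ P :=
    hcopZ.dvd_of_dvd_mul_right ⟨R, by rw [mul_comm, keyZ]⟩
  obtain ⟨m, hm⟩ := hdvd
  refine ⟨m, ?_⟩
  have h2ne : ((2 : ℚ) ^ (n - 1)) ≠ 0 := by positivity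
  apply mul_left_cancel₀ h2ne
  rw [← mul_assoc, hP, hm]
  push_cast
  ring
end

section
/- Fix a positive integer k and let p_k(u) = ((1+u)^k - 1)/u = ∑_{j=1}^{k} C(k,j) u^{j-1}. There is a unique formal power series A over ℚ with zero constant term satisfying (1+A)^k = e^{x p_k(A)}, and it satisfies A = ∑_{n≥1} p_k(A)^{n-1} x^n/n!; consequently A is a Hurwitz series. -/
open PowerSeries

/-- `p_k(u) = ((1+u)^k - 1)/u = ∑_{j=1}^{k} C(k,j) u^{j-1}`, evaluated at a power
series `u`. -/
noncomputable def pPoly (k : ℕ) (u : PowerSeries ℚ) : PowerSeries ℚ :=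
  ∑ j ∈ Finset.range k, PowerSeries.C (k.choose (j + 1) : ℚ) * u ^ j

namespace GP

/-- The fixed-point map. -/
noncomputable def Phi (k : ℕ) (A : PowerSeries ℚ) : PowerSeries ℚ :=
  PowerSeries.mk fun m =>
    ∑ n ∈ Finset.Icc 1 m,
      PowerSeries.coeff m ((pPoly k A) ^ (n - 1) * PowerSeries.X ^ n)
        / (n.factorial : ℚ)

lemma dvd_pPoly_sub (k : ℕ) (A B : PowerSeries ℚ) :
    (A - B) ∣ (pPoly k A - pPoly k B) := by
  unfold pPoly
  rw [← Finset.sum_sub_distrib]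
  refine Finset.dvd_sum fun j _ => ?_
  rw [← mul_sub]
  exact Dvd.dvd.mul_left (sub_dvd_pow_sub_pow A B j) _

lemma coeff_Phi_congr {k m : ℕ} {A B : PowerSeries ℚ}
    (h : ∀ j < m, coeff j A = coeff j B) :
    coeff m (Phi k A) = coeff m (Phi k B) := by
  have hdvd : (X : PowerSeries ℚ) ^ m ∣ A - B := by
    rw [X_pow_dvd_iff]; intro j hj; simp [h j hj]
  simp only [Phi, coeff_mk]
  refine Finset.sum_congr rfl fun n hn => ?_
  simp only [Finset.mem_Icc] at hn
  congr 1
  rw [coeff_mul_X_pow', if_pos hn.2, coeff_mul_X_pow', if_pos hn.2]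
  have hd2 : (X : PowerSeries ℚ) ^ m ∣ pPoly k A ^ (n - 1) - pPoly k B ^ (n - 1) :=
    hdvd.trans ((dvd_pPoly_sub k A B).trans (sub_dvd_pow_sub_pow _ _ _))
  have := (X_pow_dvd_iff.mp hd2) (m - n) (by omega)
  rw [map_sub, sub_eq_zero] at this
  exact this

lemma coeff_Phi_ext (k : ℕ) (A : PowerSeries ℚ) {m i : ℕ} (hi : i ≤ m) :
    coeff i (Phi k A) =
      ∑ n ∈ Finset.Icc 1 m,
        coeff i ((pPoly k A) ^ (n - 1) * X ^ n) / (n.factorial : ℚ) := by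
  rw [Phi, coeff_mk]
  refine Finset.sum_subset (Finset.Icc_subset_Icc_right hi) fun n hn hn' => ?_
  simp only [Finset.mem_Icc] at hn hn'
  rw [coeff_mul_X_pow', if_neg (by omega), zero_div]

/-- `Φ(A) * p = ∑_{n ≥ 1} p^n X^n / n!` coefficientwise. -/
lemma coeff_Phi_mul (k : ℕ) (A : PowerSeries ℚ) (m : ℕ) :
    coeff m (Phi k A * pPoly k A) =
      ∑ n ∈ Finset.Icc 1 m,
        coeff m ((pPoly k A) ^ n * X ^ n) / (n.factorial : ℚ) := by
  set p := pPoly k A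
  rw [coeff_mul]
  calc ∑ ij ∈ Finset.HasAntidiagonal.antidiagonal m, coeff ij.1 (Phi k A) * coeff ij.2 p
      = ∑ ij ∈ Finset.HasAntidiagonal.antidiagonal m, ∑ n ∈ Finset.Icc 1 m,
          coeff ij.1 (p ^ (n - 1) * X ^ n) / (n.factorial : ℚ) * coeff ij.2 p := by
        refine Finset.sum_congr rfl fun ij hij => ?_
        rw [coeff_Phi_ext k A (le_of_add_le_left (Finset.HasAntidiagonal.mem_antidiagonal.mp hij).le),
          Finset.sum_mul]
    _ = ∑ n ∈ Finset.Icc 1 m, (∑ ij ∈ Finset.HasAntidiagonal.antidiagonal m,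
          coeff ij.1 (p ^ (n - 1) * X ^ n) * coeff ij.2 p) / (n.factorial : ℚ) := by
        rw [Finset.sum_comm]
        exact Finset.sum_congr rfl fun n _ => by
          rw [Finset.sum_div]
          exact Finset.sum_congr rfl fun ij _ => by ring
    _ = ∑ n ∈ Finset.Icc 1 m, coeff m (p ^ n * X ^ n) / (n.factorial : ℚ) := by
        refine Finset.sum_congr rfl fun n hn => ?_
        rw [← coeff_mul]
        congr 2
        have hn1 : 1 ≤ n := (Finset.mem_Icc.mp hn).1
        rw [mul_comm _ p, ← mul_assoc, ← pow_succ', Nat.sub_add_cancel hn1]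

lemma expOf_X_mul (k : ℕ) (A : PowerSeries ℚ) :
    expOf (X * pPoly k A) = 1 + Phi k A * pPoly k A := by
  set p := pPoly k A
  ext m
  rw [expOf, comp, coeff_mk]
  have hpow : ∀ t : ℕ, (X * p) ^ t = p ^ t * X ^ t := fun t => by
    rw [mul_pow, mul_comm]
  rcases Nat.eq_zero_or_pos m with hm | hm
  · subst hm
    rw [map_add, coeff_Phi_mul]
    simp [coeff_exp, Finset.Icc_eq_empty (by omega : ¬(1:ℕ) ≤ 0)]
  · rw [map_add, coeff_Phi_mul, coeff_one, if_neg hm.ne', zero_add]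
    rw [Finset.sum_range_succ']
    have h0 : coeff 0 (exp ℚ) * coeff m ((X * p) ^ 0) = 0 := by
      simp [coeff_one, hm.ne']
    rw [h0, add_zero]
    rw [show Finset.Icc 1 m = Finset.map ⟨fun i => i + 1, add_left_injective 1⟩
        (Finset.range m) from ?_]
    · rw [Finset.sum_map]
      refine Finset.sum_congr rfl fun i _ => ?_
      simp only [Function.Embedding.coeFn_mk]
      rw [coeff_exp, hpow]
      push_cast
      field_simp
      rfl
    · ext x
      simp only [Finset.mem_Icc, Finset.mem_map, Finset.mem_range,
        Function.Embedding.coeFn_mk]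
      constructor
      · rintro ⟨h1, h2⟩; exact ⟨x - 1, by omega, by omega⟩
      · rintro ⟨i, hi, rfl⟩; omega

lemma one_add_pow (k : ℕ) (A : PowerSeries ℚ) :
    (1 + A) ^ k = 1 + A * pPoly k A := by
  rw [add_comm (1 : PowerSeries ℚ) A, add_pow]
  rw [Finset.sum_range_succ']
  simp only [one_pow, mul_one, pow_zero, Nat.choose_zero_right, Nat.cast_one, one_mul]
  rw [add_comm, pPoly, Finset.mul_sum]
  congr 1
  refine Finset.sum_congr rfl fun j _ => ?_
  rw [pow_succ']
  simp only [map_natCast]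
  ring

lemma constantCoeff_pPoly (k : ℕ) (hk : 0 < k) {A : PowerSeries ℚ}
    (hA : constantCoeff A = 0) :
    constantCoeff (pPoly k A) = k := by
  rw [pPoly, map_sum]
  rw [Finset.sum_eq_single 0]
  · simp [Nat.choose_one_right]
  · intro j _ hj
    simp [map_mul, map_pow, hA, zero_pow hj]
  · intro h
    simp at h
    omega

lemma main_equiv (k : ℕ) (hk : 0 < k) {A : PowerSeries ℚ}
    (hA : constantCoeff A = 0) :
    ((1 + A) ^ k = expOf (X * pPoly k A)) ↔ A = Phi k A := by
  have hp : pPoly k A ≠ 0 := by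
    intro h
    have h2 := constantCoeff_pPoly k hk hA
    rw [h, map_zero] at h2
    exact hk.ne' (by exact_mod_cast h2.symm)
  rw [one_add_pow, expOf_X_mul, add_right_inj]
  constructor
  · exact fun h => mul_right_cancel₀ hp h
  · intro h
    rw [← h]

/-- Recursively defined coefficients of the fixed point. -/
noncomputable def aCoef (k : ℕ) : ℕ → ℚ
  | m =>
    ∑ n ∈ Finset.Icc 1 m,
      PowerSeries.coeff m
        ((pPoly k (PowerSeries.mk fun j => if _h : j < m then aCoef k j else 0)) ^ (n - 1) *
          PowerSeries.X ^ n) / (n.factorial : ℚ)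
  termination_by m => m

lemma aCoef_fixed (k : ℕ) : PowerSeries.mk (aCoef k) = Phi k (PowerSeries.mk (aCoef k)) := by
  ext m
  rw [coeff_mk, aCoef]
  have : coeff m (Phi k (PowerSeries.mk fun j => if h : j < m then aCoef k j else 0))
      = coeff m (Phi k (PowerSeries.mk (aCoef k))) := by
    refine coeff_Phi_congr fun j hj => ?_
    rw [coeff_mk, coeff_mk, dif_pos hj]
  rw [← this, Phi, coeff_mk]

lemma fixed_unique (k : ℕ) {A B : PowerSeries ℚ}
    (hA : A = Phi k A) (hB : B = Phi k B) : A = B := by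
  ext m
  induction m using Nat.strong_induction_on with
  | _ m ih =>
    calc coeff m A = coeff m (Phi k A) := by rw [← hA]
      _ = coeff m (Phi k B) := coeff_Phi_congr ih
      _ = coeff m B := by rw [← hB]

/-! Hurwitz part -/

def ZZ : Subring ℚ := (Int.castRingHom ℚ).range

lemma natCast_mem_ZZ (n : ℕ) : (n : ℚ) ∈ ZZ := ⟨n, by simp⟩

def HW (d : ℕ) (f : PowerSeries ℚ) : Prop :=
  ∀ j ≤ d, (j.factorial : ℚ) * coeff j f ∈ ZZ

lemma HW.mul {d : ℕ} {f g : PowerSeries ℚ} (hf : HW d f) (hg : HW d g) :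
    HW d (f * g) := by
  intro j hj
  rw [coeff_mul, Finset.mul_sum]
  refine Subring.sum_mem _ fun ij hij => ?_
  have hij' : ij.1 + ij.2 = j := Finset.HasAntidiagonal.mem_antidiagonal.mp hij
  have h1 : ij.1 ≤ j := by omega
  have hfact : (j.factorial : ℚ) =
      (j.choose ij.1 : ℚ) * ij.1.factorial * ij.2.factorial := by
    rw_mod_cast [← Nat.choose_mul_factorial_mul_factorial h1]
    congr 2
    omega
  rw [hfact, show (j.choose ij.1 : ℚ) * ij.1.factorial * ij.2.factorial *
      (coeff ij.1 f * coeff ij.2 g) =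
      (j.choose ij.1 : ℚ) * ((ij.1.factorial * coeff ij.1 f) *
        (ij.2.factorial * coeff ij.2 g)) by ring]
  exact Subring.mul_mem _ (natCast_mem_ZZ _)
    (Subring.mul_mem _ (hf ij.1 (by omega)) (hg ij.2 (by omega)))

lemma HW.pow {d : ℕ} {f : PowerSeries ℚ} (hf : HW d f) (t : ℕ) : HW d (f ^ t) := by
  induction t with
  | zero =>
    intro j _
    rw [pow_zero, coeff_one]
    split <;> simp [natCast_mem_ZZ, Subring.zero_mem]
  | succ t ih =>
    rw [pow_succ]
    exact ih.mul hf

lemma HW_pPoly {d k : ℕ} {A : PowerSeries ℚ} (hA : HW d A) : HW d (pPoly k A) := by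
  intro j hj
  rw [pPoly, map_sum, Finset.mul_sum]
  refine Subring.sum_mem _ fun i _ => ?_
  rw [coeff_C_mul, show (j.factorial : ℚ) * ((k.choose (i+1) : ℚ) * coeff j (A ^ i)) =
    (k.choose (i+1) : ℚ) * ((j.factorial : ℚ) * coeff j (A ^ i)) by ring]
  exact Subring.mul_mem _ (natCast_mem_ZZ _) (hA.pow i j hj)

lemma hurwitz_of_fixed (k : ℕ) {A : PowerSeries ℚ} (hfix : A = Phi k A) :
    IsHurwitz A := by
  have key : ∀ m : ℕ, (m.factorial : ℚ) * coeff m A ∈ ZZ := by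
    intro m
    induction m using Nat.strong_induction_on with
    | _ m ih =>
      rcases Nat.eq_zero_or_pos m with hm | hm
      · subst hm
        have : coeff 0 A = 0 := by
          rw [hfix, Phi, coeff_mk]
          simp
        simp [this, Subring.zero_mem]
      · have hHWA : HW (m - 1) A := fun j hj => ih j (by omega)
        have hc : coeff m A = ∑ n ∈ Finset.Icc 1 m,
            coeff m ((pPoly k A) ^ (n - 1) * X ^ n) / (n.factorial : ℚ) := by
          nth_rewrite 1 [hfix]
          rw [Phi, coeff_mk]
        rw [hc, Finset.mul_sum]
        refine Subring.sum_mem _ fun n hn => ?_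
        obtain ⟨hn1, hnm⟩ := Finset.mem_Icc.mp hn
        rw [coeff_mul_X_pow', if_pos hnm]
        have hfac : (m.factorial : ℚ) =
            (m.choose n : ℚ) * n.factorial * (m - n).factorial := by
          rw_mod_cast [← Nat.choose_mul_factorial_mul_factorial hnm]
        have hnfac : (n.factorial : ℚ) ≠ 0 := by
          exact_mod_cast n.factorial_ne_zero
        rw [hfac, show (m.choose n : ℚ) * n.factorial * (m - n).factorial *
            (coeff (m - n) (pPoly k A ^ (n - 1)) / n.factorial) =
            (m.choose n : ℚ) * (((m - n).factorial : ℚ) *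
              coeff (m - n) (pPoly k A ^ (n - 1))) by field_simp]
        exact Subring.mul_mem _ (natCast_mem_ZZ _)
          ((HW_pPoly hHWA).pow (n - 1) (m - n) (by omega))
  intro n
  obtain ⟨z, hz⟩ := key n
  exact ⟨z, hz.symm⟩

end GP

/-- For a positive integer `k`, there is a unique formal power series `A` over `ℚ`
with zero constant term satisfying `(1+A)^k = e^{x·p_k(A)}`; moreover any such `A`
satisfies `A = ∑_{n≥1} p_k(A)^{n-1} x^n/n!` (written coefficientwise), and
consequently `A` is a Hurwitz series. -/


theorem generalized_postnikov (k : ℕ) (hk : 0 < k) :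
    (∃! A : PowerSeries ℚ, PowerSeries.constantCoeff A = 0 ∧
        (1 + A) ^ k = PowerSeries.expOf (PowerSeries.X * pPoly k A)) ∧
    ∀ A : PowerSeries ℚ, PowerSeries.constantCoeff A = 0 →
      (1 + A) ^ k = PowerSeries.expOf (PowerSeries.X * pPoly k A) →
      (A = (PowerSeries.mk fun m =>
          ∑ n ∈ Finset.Icc 1 m,
            PowerSeries.coeff m ((pPoly k A) ^ (n - 1) * PowerSeries.X ^ n)
              / (n.factorial : ℚ)) ∧
        IsHurwitz A) := by
  constructor
  · refine ⟨PowerSeries.mk (GP.aCoef k), ⟨?_, ?_⟩, ?_⟩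
    · rw [PowerSeries.constantCoeff_mk, GP.aCoef]
      simp
    · exact (GP.main_equiv k hk (by rw [PowerSeries.constantCoeff_mk, GP.aCoef]; simp)).mpr
        (GP.aCoef_fixed k)
    · rintro B ⟨hB0, hBE⟩
      exact GP.fixed_unique k ((GP.main_equiv k hk hB0).mp hBE) (GP.aCoef_fixed k)
  · intro A hA0 hAE
    have hfix : A = GP.Phi k A := (GP.main_equiv k hk hA0).mp hAE
    exact ⟨hfix, GP.hurwitz_of_fixed k hfix⟩
end

section
/- For a positive integer k, the compositional inverse of the series A with A(0)=0 satisfying (1+A)^k = e^{x p_k(A)}, where p_k(u) = ((1+u)^k-1)/u, is k x log(1+x)/((1+x)^k - 1); hence k x log(1+x)/((1+x)^k - 1) is a Hurwitz series. -/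
open PowerSeries

/-- The series `k·x·log(1+x)/((1+x)^k - 1)`, written as
`k·x·log(1+x)·(x·p_k(x))⁻¹` where `(1+x)^k - 1 = x·p_k(x)`; since `p_k(x)` has
constant term `k ≠ 0` this equals `k·log(1+x)·p_k(x)⁻¹`. -/
noncomputable def invSeries (k : ℕ) : PowerSeries ℚ :=
  PowerSeries.C (k : ℚ) * logOnePlusX * (pPoly k PowerSeries.X)⁻¹

namespace HurwitzAux

open Finset PowerSeries


open Finset PowerSeries

lemma coeff_comp (f g : PowerSeries ℚ) (n : ℕ) :
    coeff n (f.comp g) = ∑ k ∈ range (n+1), coeff k f * coeff n (g^k) := by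
  simp [PowerSeries.comp]

lemma coeff_pow_of_lt {g : PowerSeries ℚ} (hg : constantCoeff g = 0) {n k : ℕ}
    (h : n < k) : coeff n (g ^ k) = 0 := by
  have : (X : ℚ⟦X⟧)^k ∣ g^k := pow_dvd_pow_of_dvd (PowerSeries.X_dvd_iff.mpr hg) k
  exact (PowerSeries.X_pow_dvd_iff.mp this) n h

lemma comp_coeff_congr {f₁ f₂ : PowerSeries ℚ} (g : PowerSeries ℚ) {n : ℕ}
    (h : ∀ m ≤ n, coeff m f₁ = coeff m f₂) :
    coeff n (f₁.comp g) = coeff n (f₂.comp g) := by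
  rw [coeff_comp, coeff_comp]
  refine Finset.sum_congr rfl fun m hm => ?_
  rw [h m (Nat.lt_succ_iff.mp (mem_range.mp hm))]

lemma comp_add (f₁ f₂ g : PowerSeries ℚ) :
    (f₁ + f₂).comp g = f₁.comp g + f₂.comp g := by
  ext n
  simp only [coeff_comp, map_add, add_mul, Finset.sum_add_distrib]

lemma comp_sum {α : Type*} (s : Finset α) (f : α → PowerSeries ℚ) (g : PowerSeries ℚ) :
    (∑ i ∈ s, f i).comp g = ∑ i ∈ s, (f i).comp g := by
  induction s using Finset.cons_induction with
  | empty =>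
    ext n; simp [coeff_comp]
  | cons a s ha ih =>
    rw [Finset.sum_cons, Finset.sum_cons, comp_add, ih]

lemma comp_C_mul_X_pow {g : PowerSeries ℚ} (hg : constantCoeff g = 0) (c : ℚ) (m : ℕ) :
    (C c * X^m).comp g = C c * g^m := by
  ext n
  rw [coeff_comp]
  have : ∀ k ∈ range (n+1), coeff k (C c * X^m) * coeff n (g^k)
      = if k = m then c * coeff n (g^m) else 0 := by
    intro k _
    rw [coeff_C_mul, coeff_X_pow]
    by_cases h : k = m <;> simp [h]
  rw [Finset.sum_congr rfl this, Finset.sum_ite_eq' (range (n+1)) m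
    (fun _ => c * coeff n (g^m))]
  by_cases hm : m ∈ range (n+1)
  · rw [if_pos hm, coeff_C_mul]
  · rw [if_neg hm, coeff_C_mul, coeff_pow_of_lt hg]
    · ring
    · exact Nat.lt_of_succ_le (le_of_not_gt (fun h => hm (mem_range.mpr h)))

lemma comp_coe {g : PowerSeries ℚ} (hg : constantCoeff g = 0) (P : Polynomial ℚ) :
    (P : PowerSeries ℚ).comp g = Polynomial.aeval g P := by
  induction P using Polynomial.induction_on' with
  | add p q hp hq => rw [Polynomial.coe_add, comp_add, hp, hq, map_add]
  | monomial m c =>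
    have hmon : ((Polynomial.monomial m c : Polynomial ℚ) : PowerSeries ℚ)
        = C c * X^m := by
      rw [Polynomial.coe_monomial]
      ext i
      rw [PowerSeries.coeff_monomial, PowerSeries.coeff_C_mul, coeff_X_pow]
      split_ifs <;> simp
    rw [hmon, comp_C_mul_X_pow hg, Polynomial.aeval_monomial]
    congr 1

lemma coeff_coe_trunc_of_le (f : PowerSeries ℚ) {m n : ℕ} (h : m ≤ n) :
    coeff m ((trunc (n+1) f : Polynomial ℚ) : PowerSeries ℚ) = coeff m f := by
  rw [Polynomial.coeff_coe, coeff_trunc, if_pos (Nat.lt_succ_of_le h)]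

lemma comp_mul {g : PowerSeries ℚ} (hg : constantCoeff g = 0) (f₁ f₂ : PowerSeries ℚ) :
    (f₁ * f₂).comp g = f₁.comp g * f₂.comp g := by
  ext n
  have e1 : coeff n ((f₁ * f₂).comp g)
      = coeff n (((trunc (n+1) f₁ * trunc (n+1) f₂ : Polynomial ℚ) : PowerSeries ℚ).comp g) := by
    refine comp_coeff_congr g fun m hm => ?_
    rw [Polynomial.coe_mul, PowerSeries.coeff_mul, PowerSeries.coeff_mul]
    refine Finset.sum_congr rfl fun p hp => ?_
    have hp' := Finset.HasAntidiagonal.mem_antidiagonal.mp hp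
    have h1 : p.1 ≤ n := le_trans (le_trans (Nat.le_add_right _ _) hp'.le) hm
    have h2 : p.2 ≤ n := le_trans (le_trans (Nat.le_add_left _ _) hp'.le) hm
    rw [coeff_coe_trunc_of_le f₁ h1, coeff_coe_trunc_of_le f₂ h2]
  have e2 : ∀ m ≤ n, ∀ (f : PowerSeries ℚ),
      coeff m ((((trunc (n+1) f) : Polynomial ℚ) : PowerSeries ℚ).comp g)
      = coeff m (f.comp g) := by
    intro m hm f
    refine comp_coeff_congr g fun i hi => ?_
    exact coeff_coe_trunc_of_le f (le_trans hi hm)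
  rw [e1, comp_coe hg, map_mul, ← comp_coe hg, ← comp_coe hg,
    PowerSeries.coeff_mul, PowerSeries.coeff_mul]
  refine Finset.sum_congr rfl fun p hp => ?_
  have hp' := Finset.HasAntidiagonal.mem_antidiagonal.mp hp
  have h1 : p.1 ≤ n := le_trans (Nat.le_add_right _ _) hp'.le
  have h2 : p.2 ≤ n := le_trans (Nat.le_add_left _ _) hp'.le
  rw [e2 _ h1 f₁, e2 _ h2 f₂]

lemma comp_C (c : ℚ) (g : PowerSeries ℚ) : (C c).comp g = C c := by
  ext n
  rw [coeff_comp]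
  rcases Nat.eq_zero_or_pos n with h | h
  · subst h; simp
  · rw [Finset.sum_eq_single 0]
    · simp [coeff_C, Nat.pos_iff_ne_zero.mp h]
    · intro b _ hb
      rw [coeff_C, if_neg hb, zero_mul]
    · intro h'; exact absurd (mem_range.mpr (Nat.succ_pos n)) h'

lemma comp_one (g : PowerSeries ℚ) : (1 : PowerSeries ℚ).comp g = 1 := by
  have := comp_C 1 g; simpa using this

lemma comp_X {g : PowerSeries ℚ} (hg : constantCoeff g = 0) :
    (X : PowerSeries ℚ).comp g = g := by
  have : (X : PowerSeries ℚ) = C 1 * X^1 := by simp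
  rw [this, comp_C_mul_X_pow hg]; simp

lemma comp_pow {g : PowerSeries ℚ} (hg : constantCoeff g = 0) (f : PowerSeries ℚ) (m : ℕ) :
    (f^m).comp g = (f.comp g)^m := by
  induction m with
  | zero => simpa using comp_one g
  | succ m ih => rw [pow_succ, comp_mul hg, ih, pow_succ]

lemma comp_id (f : PowerSeries ℚ) : f.comp X = f := by
  ext n
  rw [coeff_comp, Finset.sum_eq_single n]
  · simp [coeff_X_pow]
  · intro b hb hbn
    rw [coeff_X_pow, if_neg (fun h => hbn h.symm), mul_zero]
  · intro h; exact absurd (mem_range.mpr (Nat.lt_succ_self n)) h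

lemma constantCoeff_comp (f g : PowerSeries ℚ) :
    constantCoeff (f.comp g) = constantCoeff f := by
  have := coeff_comp f g 0
  rw [coeff_zero_eq_constantCoeff] at this
  rw [this]
  simp

lemma pPoly_comp {g : PowerSeries ℚ} (hg : constantCoeff g = 0) (k : ℕ) :
    (pPoly k X).comp g = pPoly k g := by
  rw [pPoly, comp_sum]
  refine Finset.sum_congr rfl fun j _ => comp_C_mul_X_pow hg _ _

lemma comp_assoc {g h : PowerSeries ℚ} (hg : constantCoeff g = 0)
    (hh : constantCoeff h = 0) (f : PowerSeries ℚ) :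
    (f.comp g).comp h = f.comp (g.comp h) := by
  ext n
  rw [coeff_comp, coeff_comp]
  have e1 : ∀ j ∈ range (n+1), coeff j (f.comp g) * coeff n (h^j)
      = ∑ m ∈ range (n+1), coeff m f * (coeff j (g^m) * coeff n (h^j)) := by
    intro j hj
    rw [coeff_comp, Finset.sum_mul]
    rw [← Finset.sum_subset (Finset.range_subset_range.mpr
      (Nat.succ_le_succ (Nat.lt_succ_iff.mp (mem_range.mp hj))))]
    · exact Finset.sum_congr rfl fun m _ => by ring
    · intro m _ hm
      rw [coeff_pow_of_lt hg (Nat.lt_of_succ_le (le_of_not_gt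
        (fun hlt => hm (mem_range.mpr hlt)))), zero_mul, mul_zero]
  rw [Finset.sum_congr rfl e1, Finset.sum_comm]
  refine Finset.sum_congr rfl fun m _ => ?_
  rw [← Finset.mul_sum]
  congr 1
  rw [← coeff_comp, comp_pow hh]


open Finset PowerSeries

lemma coeff_derivativeFun' (f : PowerSeries ℚ) (n : ℕ) :
    coeff n (derivativeFun f) = coeff (n + 1) f * (n + 1) :=
  coeff_derivative f n

lemma deriv_pow_succ (f : PowerSeries ℚ) (m : ℕ) :
    derivativeFun (f^(m+1)) = C ((m:ℚ)+1) * f^m * derivativeFun f := by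
  induction m with
  | zero => simp
  | succ m ih =>
    rw [pow_succ, derivativeFun_mul, ih, smul_eq_mul, smul_eq_mul]
    have hC : C ((m:ℚ)+1+1) = C ((m:ℚ)+1) + 1 := by rw [map_add, map_one]
    push_cast
    rw [hC]
    ring

lemma deriv_comp {g : PowerSeries ℚ} (hg : constantCoeff g = 0) (f : PowerSeries ℚ) :
    derivativeFun (f.comp g) = (derivativeFun f).comp g * derivativeFun g := by
  ext n
  rw [coeff_derivativeFun', coeff_comp, PowerSeries.coeff_mul]
  have e1 : ∀ p ∈ Finset.HasAntidiagonal.antidiagonal n,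
      coeff p.1 ((derivativeFun f).comp g) * coeff p.2 (derivativeFun g)
      = ∑ m ∈ range (n+1), coeff m (derivativeFun f)
          * (coeff p.1 (g^m) * coeff p.2 (derivativeFun g)) := by
    intro p hp
    have hp' := Finset.HasAntidiagonal.mem_antidiagonal.mp hp
    have h1 : p.1 ≤ n := le_trans (Nat.le_add_right _ _) hp'.le
    rw [coeff_comp, Finset.sum_mul]
    rw [← Finset.sum_subset (Finset.range_subset_range.mpr (Nat.succ_le_succ h1))]
    · exact Finset.sum_congr rfl fun m _ => by ring
    · intro m _ hm
      rw [coeff_pow_of_lt hg (Nat.lt_of_succ_le (le_of_not_gt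
        (fun hlt => hm (mem_range.mpr hlt)))), zero_mul, mul_zero]
  rw [Finset.sum_congr rfl e1, Finset.sum_comm]
  have e2 : ∀ m ∈ range (n+1),
      (∑ p ∈ Finset.HasAntidiagonal.antidiagonal n, coeff m (derivativeFun f)
        * (coeff p.1 (g^m) * coeff p.2 (derivativeFun g)))
      = coeff (m+1) f * (coeff (n+1) (g^(m+1)) * (n+1)) := by
    intro m _
    rw [← Finset.mul_sum, ← PowerSeries.coeff_mul, coeff_derivativeFun']
    have : g^m * derivativeFun g = C (((m:ℚ)+1))⁻¹ * derivativeFun (g^(m+1)) := by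
      rw [deriv_pow_succ]
      rw [← mul_assoc, ← mul_assoc, ← map_mul]
      rw [inv_mul_cancel₀ (by positivity : ((m:ℚ)+1) ≠ 0)]
      simp
    rw [this, PowerSeries.coeff_C_mul, coeff_derivativeFun']
    field_simp
  rw [Finset.sum_congr rfl e2, Finset.sum_mul,
    Finset.sum_range_succ' (fun k => coeff k f * coeff (n+1) (g^k) * ((n:ℚ)+1)) (n+1)]
  simp only [pow_zero, PowerSeries.coeff_one, Nat.succ_ne_zero, if_neg, mul_zero, add_zero,
    if_false, zero_mul]
  refine Finset.sum_congr rfl fun m _ => by ring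

lemma deriv_unique {f g : PowerSeries ℚ} (hd : derivativeFun f = derivativeFun g)
    (h0 : constantCoeff f = constantCoeff g) : f = g := by
  ext n
  cases n with
  | zero => simpa [coeff_zero_eq_constantCoeff] using h0
  | succ n =>
    have := congrArg (coeff n) hd
    rw [coeff_derivativeFun', coeff_derivativeFun'] at this
    exact mul_right_cancel₀ (by positivity : ((n:ℚ)+1) ≠ 0) this

noncomputable def geom : PowerSeries ℚ := PowerSeries.mk fun n => (-1)^n

lemma geom_mul_oneX : geom * (1 + X) = 1 := by
  ext n
  rw [mul_add, mul_one, map_add]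
  cases n with
  | zero => simp [geom]
  | succ n =>
    rw [coeff_succ_mul_X]
    simp [geom, pow_succ]

lemma deriv_log : derivativeFun logOnePlusX = geom := by
  ext n
  rw [coeff_derivativeFun', logOnePlusX, geom, coeff_mk, coeff_mk,
    if_neg (Nat.succ_ne_zero n)]
  simp only [Nat.add_sub_cancel]
  push_cast
  field_simp

lemma deriv_exp : derivativeFun (exp ℚ) = exp ℚ := by
  ext n
  rw [coeff_derivativeFun', PowerSeries.coeff_exp, PowerSeries.coeff_exp, Nat.factorial_succ]
  have h2 : ((n).factorial : ℚ) ≠ 0 := by exact_mod_cast (Nat.factorial_pos _).ne'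
  simp only [Algebra.algebraMap_self, RingHom.id_apply]
  field_simp
  push_cast
  ring

lemma constantCoeff_log : constantCoeff logOnePlusX = 0 := by
  rw [← coeff_zero_eq_constantCoeff]
  simp [logOnePlusX]

lemma log_deriv_mul {u : PowerSeries ℚ} (hu : constantCoeff u = 0) :
    derivativeFun (logOnePlusX.comp u) * (1 + u) = derivativeFun u := by
  rw [deriv_comp hu, deriv_log]
  have h1 : (1 : PowerSeries ℚ) + u = ((1 : PowerSeries ℚ) + X).comp u := by
    rw [comp_add, comp_one, comp_X hu]
  calc geom.comp u * derivativeFun u * (1 + u)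
      = geom.comp u * (((1 : PowerSeries ℚ) + X).comp u) * derivativeFun u := by
        rw [← h1]; ring
    _ = ((geom * ((1 : PowerSeries ℚ)+X)).comp u) * derivativeFun u := by rw [comp_mul hu]
    _ = derivativeFun u := by rw [geom_mul_oneX, comp_one, one_mul]


open Finset PowerSeries

lemma one_add_ne_zero {u : PowerSeries ℚ} (hu : constantCoeff u = 0) :
    (1 : PowerSeries ℚ) + u ≠ 0 := by
  intro h
  have := congrArg (constantCoeff) h
  rw [map_add, map_one, hu, map_zero] at this
  norm_num at this

lemma log_comp_exp {T : PowerSeries ℚ} (hT : constantCoeff T = 0) :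
    logOnePlusX.comp ((exp ℚ).comp T - 1) = T := by
  set u := (exp ℚ).comp T - 1 with hu_def
  have h1u : (1 : ℚ⟦X⟧) + u = (exp ℚ).comp T := by rw [hu_def]; ring
  have hcu : constantCoeff u = 0 := by
    rw [hu_def, map_sub, constantCoeff_comp, constantCoeff_exp, map_one, sub_self]
  have hDu : derivativeFun u = ((1:ℚ⟦X⟧) + u) * derivativeFun T := by
    have e : derivativeFun ((exp ℚ).comp T) = derivativeFun u := by
      rw [← h1u, derivativeFun_add, derivativeFun_one, zero_add]
    rw [← e, deriv_comp hT, deriv_exp, h1u]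
  have hne := one_add_ne_zero hcu
  have hd : derivativeFun (logOnePlusX.comp u) = derivativeFun T := by
    apply mul_right_cancel₀ hne
    rw [log_deriv_mul hcu, hDu]; ring
  exact deriv_unique hd (by rw [constantCoeff_comp, constantCoeff_log, hT])

lemma log_comp_pow {g : PowerSeries ℚ} (hg : constantCoeff g = 0) {k : ℕ} (hk : 0 < k) :
    logOnePlusX.comp ((1+g)^k - 1) = C (k:ℚ) * logOnePlusX.comp g := by
  obtain ⟨m, rfl⟩ := Nat.exists_eq_succ_of_ne_zero hk.ne'
  set v := ((1:ℚ⟦X⟧)+g)^(m+1) - 1 with hv_def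
  have h1v : (1 : ℚ⟦X⟧) + v = (1+g)^(m+1) := by rw [hv_def]; ring
  have hcv : constantCoeff v = 0 := by
    rw [hv_def, map_sub, map_pow, map_add, map_one, hg]
    norm_num
  have hD1g : derivativeFun ((1:ℚ⟦X⟧) + g) = derivativeFun g := by
    rw [derivativeFun_add, derivativeFun_one, zero_add]
  have hDv : derivativeFun v = C ((m:ℚ)+1) * (1+g)^m * derivativeFun g := by
    have e : derivativeFun ((1+g)^(m+1)) = derivativeFun v := by
      rw [← h1v, derivativeFun_add, derivativeFun_one, zero_add]
    rw [← e, deriv_pow_succ, hD1g]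
  have hne := one_add_ne_zero hg
  have hpow_ne : ((1:ℚ⟦X⟧)+g)^(m+1) ≠ 0 := pow_ne_zero _ hne
  have hd : derivativeFun (logOnePlusX.comp v)
      = derivativeFun (C ((m:ℚ)+1) * logOnePlusX.comp g) := by
    apply mul_right_cancel₀ hpow_ne
    have hL : derivativeFun (logOnePlusX.comp v) * ((1:ℚ⟦X⟧)+g)^(m+1)
        = C ((m:ℚ)+1) * (1+g)^m * derivativeFun g := by
      rw [← h1v, log_deriv_mul hcv, hDv]
    have hR : derivativeFun (logOnePlusX.comp g) * ((1:ℚ⟦X⟧)+g) = derivativeFun g :=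
      log_deriv_mul hg
    have hDC : derivativeFun (C ((m:ℚ)+1) * logOnePlusX.comp g)
        = C ((m:ℚ)+1) * derivativeFun (logOnePlusX.comp g) := by
      rw [← smul_eq_C_mul, derivativeFun_smul, smul_eq_C_mul]
    rw [hL, hDC, pow_succ]
    calc C ((m:ℚ)+1) * (1+g)^m * derivativeFun g
        = C ((m:ℚ)+1) * (1+g)^m * (derivativeFun (logOnePlusX.comp g) * ((1:ℚ⟦X⟧)+g)) := by
          rw [hR]
      _ = C ((m:ℚ)+1) * derivativeFun (logOnePlusX.comp g) * ((1+g)^m * (1+g)) := by ring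
  have hcc : constantCoeff (logOnePlusX.comp v)
      = constantCoeff (C ((m:ℚ)+1) * logOnePlusX.comp g) := by
    rw [constantCoeff_comp, constantCoeff_log, map_mul, constantCoeff_comp, constantCoeff_log,
      mul_zero]
  have := deriv_unique hd hcc
  rw [this]
  push_cast
  ring

lemma constantCoeff_pPoly {g : PowerSeries ℚ} (hg : constantCoeff g = 0) (k : ℕ) :
    constantCoeff (pPoly k g) = (k : ℚ) := by
  rw [pPoly, map_sum]
  rcases Nat.eq_zero_or_pos k with h | h
  · subst h; simp
  · rw [Finset.sum_eq_single 0]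
    · simp [Nat.choose_one_right]
    · intro j _ hj
      rw [map_mul, map_pow, hg, zero_pow hj, mul_zero]
    · intro h'
      exact absurd (mem_range.mpr h) h'

lemma pPoly_X_ne (k : ℕ) (hk : 0 < k) : constantCoeff (pPoly k X) ≠ 0 := by
  rw [constantCoeff_pPoly constantCoeff_X k]
  exact_mod_cast hk.ne'

lemma invSeries_mul_pPoly (k : ℕ) (hk : 0 < k) :
    invSeries k * pPoly k X = C (k:ℚ) * logOnePlusX := by
  rw [invSeries, mul_assoc, PowerSeries.inv_mul_cancel _ (pPoly_X_ne k hk), mul_one]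

lemma key {k : ℕ} (hk : 0 < k) {A : PowerSeries ℚ} (h0 : constantCoeff A = 0)
    (hA : (1 + A) ^ k = PowerSeries.expOf (X * pPoly k A)) :
    C (k:ℚ) * logOnePlusX.comp A = X * pPoly k A := by
  have hT : constantCoeff (X * pPoly k A) = 0 := by
    rw [map_mul, constantCoeff_X, zero_mul]
  calc C (k:ℚ) * logOnePlusX.comp A
      = logOnePlusX.comp ((1+A)^k - 1) := (log_comp_pow h0 hk).symm
    _ = logOnePlusX.comp ((exp ℚ).comp (X * pPoly k A) - 1) := by
        rw [hA]; rfl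
    _ = X * pPoly k A := log_comp_exp hT

lemma pPoly_ne {A : PowerSeries ℚ} (h0 : constantCoeff A = 0) {k : ℕ} (hk : 0 < k) :
    pPoly k A ≠ 0 := by
  intro h
  have := congrArg (constantCoeff) h
  rw [constantCoeff_pPoly h0, map_zero] at this
  exact (by exact_mod_cast hk.ne' : (k:ℚ) ≠ 0) this

lemma goal2 {k : ℕ} (hk : 0 < k) {A : PowerSeries ℚ} (h0 : constantCoeff A = 0)
    (hA : (1 + A) ^ k = PowerSeries.expOf (X * pPoly k A)) :
    (invSeries k).comp A = X := by
  have h1 : (invSeries k).comp A * pPoly k A = X * pPoly k A := by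
    calc (invSeries k).comp A * pPoly k A
        = (invSeries k).comp A * (pPoly k X).comp A := by rw [pPoly_comp h0]
      _ = (invSeries k * pPoly k X).comp A := (comp_mul h0 _ _).symm
      _ = (C (k:ℚ) * logOnePlusX).comp A := by rw [invSeries_mul_pPoly k hk]
      _ = C (k:ℚ) * logOnePlusX.comp A := by rw [comp_mul h0, comp_C]
      _ = X * pPoly k A := key hk h0 hA
  exact mul_right_cancel₀ (pPoly_ne h0 hk) h1


open Finset PowerSeries

lemma pow_agree {Z₁ Z₂ : ℚ⟦X⟧} {N : ℕ} (h : ∀ i ≤ N, coeff i Z₁ = coeff i Z₂) :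
    ∀ j, ∀ i ≤ N, coeff i (Z₁^j) = coeff i (Z₂^j) := by
  intro j
  induction j with
  | zero => intro i _; rfl
  | succ j ih =>
    intro i hi
    rw [pow_succ, pow_succ, PowerSeries.coeff_mul, PowerSeries.coeff_mul]
    refine Finset.sum_congr rfl fun p hp => ?_
    have hp' := Finset.HasAntidiagonal.mem_antidiagonal.mp hp
    have h1 : p.1 ≤ N := le_trans (le_trans (Nat.le_add_right _ _) hp'.le) hi
    have h2 : p.2 ≤ N := le_trans (le_trans (Nat.le_add_left _ _) hp'.le) hi
    rw [ih p.1 h1, h p.2 h2]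

lemma pow_coeff_high {Z₁ Z₂ : ℚ⟦X⟧} {n : ℕ} (hz1 : constantCoeff Z₁ = 0)
    (hz2 : constantCoeff Z₂ = 0) (h : ∀ i < n, coeff i Z₁ = coeff i Z₂) (m : ℕ) :
    coeff n (Z₁^(m+2)) = coeff n (Z₂^(m+2)) := by
  rw [pow_succ Z₁ (m+1), pow_succ Z₂ (m+1), PowerSeries.coeff_mul, PowerSeries.coeff_mul]
  refine Finset.sum_congr rfl fun p hp => ?_
  have hp' := Finset.HasAntidiagonal.mem_antidiagonal.mp hp
  rcases Nat.eq_zero_or_pos p.1 with ha | ha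
  · have e1 : coeff 0 (Z₁^(m+1)) = 0 := by
      rw [coeff_zero_eq_constantCoeff, map_pow, hz1, zero_pow (Nat.succ_ne_zero m)]
    have e2 : coeff 0 (Z₂^(m+1)) = 0 := by
      rw [coeff_zero_eq_constantCoeff, map_pow, hz2, zero_pow (Nat.succ_ne_zero m)]
    rw [ha, e1, e2, zero_mul, zero_mul]
  rcases Nat.eq_zero_or_pos p.2 with hb | hb
  · have e1 : coeff 0 Z₁ = 0 := by rw [coeff_zero_eq_constantCoeff]; exact hz1
    have e2 : coeff 0 Z₂ = 0 := by rw [coeff_zero_eq_constantCoeff]; exact hz2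
    rw [hb, e1, e2, mul_zero, mul_zero]
  · have han : p.1 < n := by omega
    have hbn : p.2 < n := by omega
    rw [pow_agree (N := p.1) (fun i hi => h i (lt_of_le_of_lt hi han)) (m+1) p.1 le_rfl,
      h p.2 hbn]

lemma solution_unique {k : ℕ} (hk : 0 < k) {L Z₁ Z₂ : ℚ⟦X⟧} (hL : constantCoeff L = 0)
    (h1 : constantCoeff Z₁ = 0) (h2 : constantCoeff Z₂ = 0)
    (he : C (k:ℚ) * logOnePlusX.comp Z₁ - L * pPoly k Z₁
        = C (k:ℚ) * logOnePlusX.comp Z₂ - L * pPoly k Z₂) :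
    Z₁ = Z₂ := by
  ext n
  induction n using Nat.strong_induction_on with
  | _ n ih =>
  rcases Nat.eq_zero_or_pos n with hn | hn
  · subst hn
    rw [coeff_zero_eq_constantCoeff, h1, h2]
  · have hcoeff := congrArg (coeff n) he
    rw [map_sub, map_sub] at hcoeff
    have hLp : coeff n (L * pPoly k Z₁) = coeff n (L * pPoly k Z₂) := by
      rw [PowerSeries.coeff_mul, PowerSeries.coeff_mul]
      refine Finset.sum_congr rfl fun p hp => ?_
      have hp' := Finset.HasAntidiagonal.mem_antidiagonal.mp hp
      rcases Nat.eq_zero_or_pos p.1 with ha | ha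
      · have e0 : coeff 0 L = 0 := by rw [coeff_zero_eq_constantCoeff]; exact hL
        rw [ha, e0, zero_mul, zero_mul]
      · have hbn : p.2 < n := by omega
        congr 1
        rw [pPoly, pPoly, map_sum, map_sum]
        refine Finset.sum_congr rfl fun j _ => ?_
        rw [PowerSeries.coeff_C_mul, PowerSeries.coeff_C_mul,
          pow_agree (N := p.2) (fun i hi => ih i (lt_of_le_of_lt hi hbn)) j p.2 le_rfl]
    have hlog : coeff n (C (k:ℚ) * logOnePlusX.comp Z₁)
        - coeff n (C (k:ℚ) * logOnePlusX.comp Z₂)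
        = (k:ℚ) * (coeff n Z₁ - coeff n Z₂) := by
      rw [PowerSeries.coeff_C_mul, PowerSeries.coeff_C_mul, coeff_comp, coeff_comp,
        ← mul_sub, ← Finset.sum_sub_distrib]
      congr 1
      rw [Finset.sum_eq_single 1]
      · simp [logOnePlusX]
      · intro j hj hj1
        match j, hj1 with
        | 0, _ => simp [logOnePlusX]
        | (m+2), _ =>
          rw [pow_coeff_high h1 h2 (fun i hi => ih i hi) m, sub_self]
      · intro h'
        exact absurd (mem_range.mpr (by omega)) h'
    have hzero : (k:ℚ) * (coeff n Z₁ - coeff n Z₂) = 0 := by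
      rw [← hlog]
      linear_combination hcoeff + hLp
    have hk' : (k:ℚ) ≠ 0 := by exact_mod_cast hk.ne'
    have := (mul_eq_zero.mp hzero).resolve_left hk'
    linarith [this]

lemma goal1 {k : ℕ} (hk : 0 < k) {A : PowerSeries ℚ} (h0 : constantCoeff A = 0)
    (hA : (1 + A) ^ k = PowerSeries.expOf (X * pPoly k A)) :
    A.comp (invSeries k) = X := by
  set L := invSeries k with hL_def
  have hL0 : constantCoeff L = 0 := by
    rw [hL_def, invSeries, map_mul, map_mul, constantCoeff_log, mul_zero, zero_mul]
  set B := A.comp L with hB_def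
  have hB0 : constantCoeff B = 0 := by rw [hB_def, constantCoeff_comp, h0]
  have hkey := key hk h0 hA
  have hiB : C (k:ℚ) * logOnePlusX.comp B = L * pPoly k B := by
    have h := congrArg (fun f => PowerSeries.comp f L) hkey
    rw [comp_mul hL0, comp_mul hL0, comp_C, comp_X hL0,
      comp_assoc h0 hL0 logOnePlusX, ← pPoly_comp h0 k,
      comp_assoc h0 hL0 (pPoly k X), pPoly_comp hB0 k] at h
    exact h
  have hiX : C (k:ℚ) * logOnePlusX.comp X = L * pPoly k X := by
    rw [comp_id, hL_def, invSeries_mul_pPoly k hk]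
  refine solution_unique hk hL0 hB0 constantCoeff_X ?_
  rw [hiB, hiX, sub_self, sub_self]

/-! ### Hurwitz part -/

noncomputable def Eser (k : ℕ) : PowerSeries ℚ :=
  PowerSeries.mk fun n => ∑ m ∈ Finset.range n,
    (-1:ℚ)^m/(m+1) * coeff n (X^(m+1) * (pPoly k X)^m)

lemma coeff_X_pow_mul_lt {f : ℚ⟦X⟧} {n j : ℕ} (h : n < j) : coeff n (X^j * f) = 0 := by
  have hdvd : (X:ℚ⟦X⟧)^j ∣ X^j * f := Dvd.intro f rfl
  exact PowerSeries.X_pow_dvd_iff.mp hdvd n h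

lemma X_mul_pPoly (k : ℕ) : (X : ℚ⟦X⟧) * pPoly k X = (1 + X)^k - 1 := by
  have hb : ((1:ℚ⟦X⟧) + X)^k = ∑ i ∈ range (k+1), X^i * (k.choose i : ℚ⟦X⟧) := by
    rw [add_comm (1:ℚ⟦X⟧) X, add_pow]
    exact Finset.sum_congr rfl fun i _ => by rw [one_pow, mul_one]
  rw [hb, Finset.sum_range_succ' (fun i => (X:ℚ⟦X⟧)^i * (k.choose i : ℚ⟦X⟧)) k]
  simp only [pow_zero, Nat.choose_zero_right, Nat.cast_one, one_mul]
  rw [add_sub_cancel_right, pPoly, Finset.mul_sum]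
  refine Finset.sum_congr rfl fun i _ => ?_
  rw [← map_natCast C (k.choose (i+1))]
  ring

lemma E_mul_pPoly (k : ℕ) (hk : 0 < k) :
    Eser k * pPoly k X = C (k:ℚ) * logOnePlusX := by
  have hXc : constantCoeff (X : ℚ⟦X⟧) = 0 := constantCoeff_X
  have hlogY : logOnePlusX.comp ((X:ℚ⟦X⟧) * pPoly k X) = C (k:ℚ) * logOnePlusX := by
    rw [X_mul_pPoly k, log_comp_pow hXc hk, comp_id]
  rw [← hlogY]
  ext n
  rw [PowerSeries.coeff_mul, coeff_comp]
  have e1 : ∀ p ∈ Finset.HasAntidiagonal.antidiagonal n,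
      coeff p.1 (Eser k) * coeff p.2 (pPoly k X)
      = ∑ m ∈ range n, (-1:ℚ)^m/(m+1)
          * (coeff p.1 (X^(m+1) * (pPoly k X)^m) * coeff p.2 (pPoly k X)) := by
    intro p hp
    have hp1 : p.1 ≤ n := le_trans (Nat.le_add_right _ _) (Finset.HasAntidiagonal.mem_antidiagonal.mp hp).le
    rw [Eser, coeff_mk, Finset.sum_mul]
    rw [← Finset.sum_subset (Finset.range_subset_range.mpr hp1)]
    · exact Finset.sum_congr rfl fun m _ => by ring
    · intro m _ hm
      have : p.1 < m + 1 := Nat.lt_succ_of_le (le_of_not_gt (fun h => hm (mem_range.mpr h)))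
      rw [coeff_X_pow_mul_lt this, zero_mul, mul_zero]
  rw [Finset.sum_congr rfl e1, Finset.sum_comm]
  have e2 : ∀ m ∈ range n,
      (∑ p ∈ Finset.HasAntidiagonal.antidiagonal n, (-1:ℚ)^m/(m+1)
          * (coeff p.1 (X^(m+1) * (pPoly k X)^m) * coeff p.2 (pPoly k X)))
      = (-1:ℚ)^m/(m+1) * coeff n (((X:ℚ⟦X⟧) * pPoly k X)^(m+1)) := by
    intro m _
    rw [← Finset.mul_sum, ← PowerSeries.coeff_mul]
    congr 2
    rw [mul_pow, pow_succ (pPoly k X) m, mul_assoc]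
  rw [Finset.sum_congr rfl e2,
    Finset.sum_range_succ' (fun j => coeff j logOnePlusX
      * coeff n (((X:ℚ⟦X⟧) * pPoly k X)^j)) n]
  have e3 : coeff 0 logOnePlusX = 0 := by simp [logOnePlusX]
  rw [e3, zero_mul, add_zero]
  refine Finset.sum_congr rfl fun m _ => ?_
  have e4 : coeff (m+1) logOnePlusX = (-1:ℚ)^m/(m+1) := by
    rw [logOnePlusX, coeff_mk, if_neg (Nat.succ_ne_zero m), Nat.add_sub_cancel]
    push_cast
    ring
  rw [e4]

lemma invSeries_eq (k : ℕ) (hk : 0 < k) : invSeries k = Eser k := by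
  have h3 : (invSeries k - Eser k) * pPoly k X = 0 := by
    rw [sub_mul, invSeries_mul_pPoly k hk, E_mul_pPoly k hk, sub_self]
  have hp : pPoly k X ≠ 0 := fun h => pPoly_X_ne k hk (by rw [h, map_zero])
  rcases mul_eq_zero.mp h3 with h | h
  · exact sub_eq_zero.mp h
  · exact absurd h hp

noncomputable def pZ (k : ℕ) : PowerSeries ℤ :=
  ∑ j ∈ Finset.range k, PowerSeries.C (k.choose (j + 1) : ℤ) * X ^ j

lemma map_pZ (k : ℕ) : PowerSeries.map (Int.castRingHom ℚ) (pZ k) = pPoly k X := by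
  rw [pZ, pPoly, map_sum]
  refine Finset.sum_congr rfl fun j _ => ?_
  rw [map_mul, PowerSeries.map_C, map_pow, PowerSeries.map_X]
  norm_num

lemma coeff_int (k n m : ℕ) : coeff n (X^(m+1) * (pPoly k X)^m)
    = ((coeff n (X^(m+1) * (pZ k)^m) : ℤ) : ℚ) := by
  have h : (X:ℚ⟦X⟧)^(m+1) * (pPoly k X)^m
      = PowerSeries.map (Int.castRingHom ℚ) (X^(m+1) * (pZ k)^m) := by
    rw [map_mul, map_pow, map_pow, PowerSeries.map_X, map_pZ]
  rw [h, PowerSeries.coeff_map]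
  rfl

lemma goal3 (k : ℕ) (hk : 0 < k) : IsHurwitz (invSeries k) := by
  intro n
  rw [invSeries_eq k hk]
  refine ⟨∑ m ∈ Finset.range n, (-1)^m * ((n.factorial / (m+1) : ℕ) : ℤ)
    * PowerSeries.coeff n (X^(m+1) * (pZ k)^m), ?_⟩
  rw [Eser, coeff_mk, Finset.mul_sum, Int.cast_sum]
  refine Finset.sum_congr rfl fun m hm => ?_
  have hmn : m + 1 ≤ n := Nat.succ_le_of_lt (mem_range.mp hm)
  have hdvd : (m+1) ∣ n.factorial := Nat.dvd_factorial (Nat.succ_pos m) hmn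
  have hc : ((n.factorial / (m+1) : ℕ) : ℚ) = (n.factorial : ℚ) / ((m:ℚ)+1) := by
    rw [Nat.cast_div hdvd (by positivity)]
    push_cast
    ring
  have hm1 : ((m:ℚ)+1) ≠ 0 := by positivity
  rw [coeff_int k n m, Int.cast_mul, Int.cast_mul, Int.cast_pow, Int.cast_neg, Int.cast_one,
    Int.cast_natCast, hc]
  field_simp


end HurwitzAux

/-- For a positive integer `k`, the compositional inverse of the series `A` with
`A(0) = 0` satisfying `(1+A)^k = e^{x·p_k(A)}` is `k·x·log(1+x)/((1+x)^k - 1)`;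
hence the latter is a Hurwitz series. -/
theorem generalized_inverse (k : ℕ) (hk : 0 < k) (A : PowerSeries ℚ)
    (h0 : PowerSeries.constantCoeff A = 0)
    (hA : (1 + A) ^ k = PowerSeries.expOf (PowerSeries.X * pPoly k A)) :
    PowerSeries.comp A (invSeries k) = PowerSeries.X ∧
    PowerSeries.comp (invSeries k) A = PowerSeries.X ∧
    IsHurwitz (invSeries k) := by
  refine ⟨HurwitzAux.goal1 hk h0 hA, HurwitzAux.goal2 hk h0 hA, HurwitzAux.goal3 k hk⟩
end

section
/- Let α₁, α₂, β₁, β₂ be commuting indeterminates and let F be the formal power series in x over ℚ[α₁,α₂,β₁,β₂] with zero constant term satisfying (1+α₁F)(1+β₂F)/((1+α₂F)(1+β₁F)) = e^{((α₁β₂-α₂β₁)F + α₁-β₁-α₂+β₂)x}. Then F satisfies F = (1+β₁F)(1+α₂F) ∑_{n≥1} ((α₁β₂-α₂β₁)F + α₁-α₂-β₁+β₂)^{n-1} x^n/n!, and hence every coefficient of F as an exponential generating function is a polynomial in α₁,α₂,β₁,β₂ with integer coefficients. -/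
open PowerSeries

/-- The coefficient ring `ℚ[α₁, α₂, β₁, β₂]`: variable `0` is `α₁`, `1` is `α₂`,
`2` is `β₁`, `3` is `β₂`. -/
abbrev R4 : Type := MvPolynomial (Fin 4) ℚ

/-- Composition `f(g(x))` of formal power series, valid when `g` has zero
constant term. -/
noncomputable def PowerSeries.comp' (f g : PowerSeries R4) : PowerSeries R4 :=
  PowerSeries.mk fun n =>
    ∑ k ∈ Finset.range (n + 1), PowerSeries.coeff k f * PowerSeries.coeff n (g ^ k)

/-- The formal exponential `e^S` of a power series `S` over `ℚ[α₁,α₂,β₁,β₂]` with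
zero constant term. -/
noncomputable def PowerSeries.expOf' (S : PowerSeries R4) : PowerSeries R4 :=
  PowerSeries.comp' (exp R4) S

local notation "α₁" => (MvPolynomial.X 0 : R4)
local notation "α₂" => (MvPolynomial.X 1 : R4)
local notation "β₁" => (MvPolynomial.X 2 : R4)
local notation "β₂" => (MvPolynomial.X 3 : R4)

namespace DrakeAux

/-- The subring of `R4` of polynomials with integer coefficients. -/
noncomputable def Zr : Subring R4 := (MvPolynomial.map (Int.castRingHom ℚ)).range

lemma natCast_mem (k : ℕ) : (k : R4) ∈ Zr := ⟨(k : MvPolynomial (Fin 4) ℤ), by simp⟩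

lemma X_mem (i : Fin 4) : (MvPolynomial.X i : R4) ∈ Zr :=
  ⟨MvPolynomial.X i, MvPolynomial.map_X _ i⟩

/-- Generalized Hurwitz condition up to index `N`. -/
def H (N : ℕ) (f : PowerSeries R4) : Prop :=
  ∀ j ≤ N, (j.factorial : R4) * PowerSeries.coeff j f ∈ Zr

lemma H.add {N : ℕ} {f g : PowerSeries R4} (hf : H N f) (hg : H N g) : H N (f + g) :=
  fun j hj => by
    rw [map_add, mul_add]; exact add_mem (hf j hj) (hg j hj)

lemma H.mul {N : ℕ} {f g : PowerSeries R4} (hf : H N f) (hg : H N g) : H N (f * g) := by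
  intro j hj
  rw [PowerSeries.coeff_mul, Finset.mul_sum]
  refine Subring.sum_mem _ fun p hp => ?_
  rw [Finset.HasAntidiagonal.mem_antidiagonal] at hp
  have heq : (j.factorial : R4) * (PowerSeries.coeff p.1 f * PowerSeries.coeff p.2 g)
      = (j.choose p.2 : R4) * ((p.1.factorial : R4) * PowerSeries.coeff p.1 f) *
        ((p.2.factorial : R4) * PowerSeries.coeff p.2 g) := by
    rw [← hp, ← Nat.add_choose_mul_factorial_mul_factorial p.1 p.2]
    push_cast; ring
  rw [heq]
  exact Subring.mul_mem _ (Subring.mul_mem _ (natCast_mem _) (hf p.1 (by omega)))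
    (hg p.2 (by omega))

lemma H.C' {N : ℕ} {r : R4} (hr : r ∈ Zr) : H N (PowerSeries.C r) := by
  intro j hj
  rw [PowerSeries.coeff_C]
  rcases eq_or_ne j 0 with rfl | h
  · rw [if_pos rfl]; simpa using hr
  · rw [if_neg h, mul_zero]; exact zero_mem _

lemma H.one {N : ℕ} : H N (1 : PowerSeries R4) := by
  have := H.C' (N := N) (one_mem Zr); rwa [map_one] at this

lemma H.pow {N : ℕ} {f : PowerSeries R4} (hf : H N f) : ∀ k : ℕ, H N (f ^ k)
  | 0 => by rw [pow_zero]; exact H.one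
  | (k + 1) => by rw [pow_succ]; exact (H.pow hf k).mul hf

end DrakeAux

/-- Let `F` be a power series in `x` over `ℚ[α₁,α₂,β₁,β₂]` with zero constant term
satisfying `(1+α₁F)(1+β₂F)/((1+α₂F)(1+β₁F)) = e^{((α₁β₂-α₂β₁)F + α₁-β₁-α₂+β₂)x}`
(stated in cross-multiplied form; `(1+α₂F)(1+β₁F)` is invertible, having constant
term `1`).  Then `F = (1+β₁F)(1+α₂F) ∑_{n≥1} ((α₁β₂-α₂β₁)F+α₁-α₂-β₁+β₂)^{n-1} x^n/n!`
(written coefficientwise), and hence every EGF coefficient of `F` is a polynomial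
in `α₁,α₂,β₁,β₂` with integer coefficients. -/
theorem drake_functional_equation (F : PowerSeries R4)
    (h0 : PowerSeries.constantCoeff F = 0)
    (hF : (1 + PowerSeries.C α₁ * F) * (1 + PowerSeries.C β₂ * F) =
        (1 + PowerSeries.C α₂ * F) * (1 + PowerSeries.C β₁ * F) *
          PowerSeries.expOf'
            ((PowerSeries.C (α₁ * β₂ - α₂ * β₁) * F +
              PowerSeries.C (α₁ - β₁ - α₂ + β₂)) * PowerSeries.X)) :
    F = (1 + PowerSeries.C β₁ * F) * (1 + PowerSeries.C α₂ * F) *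
        (PowerSeries.mk fun m =>
          ∑ n ∈ Finset.Icc 1 m,
            algebraMap ℚ R4 (1 / (n.factorial : ℚ)) *
              PowerSeries.coeff m
                ((PowerSeries.C (α₁ * β₂ - α₂ * β₁) * F +
                    PowerSeries.C (α₁ - α₂ - β₁ + β₂)) ^ (n - 1) *
                  PowerSeries.X ^ n)) ∧
    ∀ n : ℕ, ∃ p : MvPolynomial (Fin 4) ℤ,
      (n.factorial : R4) * PowerSeries.coeff n F =
        MvPolynomial.map (Int.castRingHom ℚ) p := by
  open DrakeAux in
  rw [show (α₁ - β₁ - α₂ + β₂ : R4) = α₁ - α₂ - β₁ + β₂ by ring] at hF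
  set A : R4 := α₁ * β₂ - α₂ * β₁ with hA
  set B : R4 := α₁ - α₂ - β₁ + β₂ with hB
  set T : PowerSeries R4 := PowerSeries.C A * F + PowerSeries.C B with hTdef
  set G : PowerSeries R4 := PowerSeries.mk fun m =>
      ∑ n ∈ Finset.Icc 1 m,
        algebraMap ℚ R4 (1 / (n.factorial : ℚ)) *
          PowerSeries.coeff m (T ^ (n - 1) * PowerSeries.X ^ n) with hGdef
  have coeffG : ∀ m, PowerSeries.coeff m G =
      ∑ n ∈ Finset.Icc 1 m,
        algebraMap ℚ R4 (1 / (n.factorial : ℚ)) *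
          PowerSeries.coeff m (T ^ (n - 1) * PowerSeries.X ^ n) :=
    fun m => PowerSeries.coeff_mk m _
  -- truncated partial sums
  set SN : ℕ → PowerSeries R4 := fun N => ∑ k ∈ Finset.Icc 1 N,
      PowerSeries.C (algebraMap ℚ R4 (1 / (k.factorial : ℚ))) *
        (T ^ (k - 1) * PowerSeries.X ^ k) with hSN
  have hGS : ∀ N m, m ≤ N → PowerSeries.coeff m G = PowerSeries.coeff m (SN N) := by
    intro N m hm
    rw [coeffG, hSN]
    simp only [map_sum, PowerSeries.coeff_C_mul]
    apply Finset.sum_subset (Finset.Icc_subset_Icc_right hm)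
    intro k hk hk'
    have hmk : m < k := by
      simp only [Finset.mem_Icc] at hk hk'; omega
    rw [PowerSeries.coeff_mul_X_pow', if_neg (by omega), mul_zero]
  have hTSN : ∀ N, T * SN N = ∑ k ∈ Finset.Icc 1 N,
      PowerSeries.C (algebraMap ℚ R4 (1 / (k.factorial : ℚ))) *
        (T ^ k * PowerSeries.X ^ k) := by
    intro N
    rw [hSN, Finset.mul_sum]
    refine Finset.sum_congr rfl fun k hk => ?_
    have h1 : 1 ≤ k := (Finset.mem_Icc.mp hk).1
    have hTk : T * T ^ (k - 1) = T ^ k := by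
      rw [← pow_succ']; congr 1; omega
    calc T * (PowerSeries.C (algebraMap ℚ R4 (1 / (k.factorial : ℚ))) *
          (T ^ (k - 1) * PowerSeries.X ^ k))
        = PowerSeries.C (algebraMap ℚ R4 (1 / (k.factorial : ℚ))) *
          ((T * T ^ (k - 1)) * PowerSeries.X ^ k) := by ring
      _ = _ := by rw [hTk]
  have expG : PowerSeries.expOf' (T * PowerSeries.X) = 1 + T * G := by
    ext m
    simp only [PowerSeries.expOf', PowerSeries.comp', PowerSeries.coeff_mk]
    have hins : Finset.range (m + 1) = insert 0 (Finset.Icc 1 m) := by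
      ext k; simp only [Finset.mem_range, Finset.mem_insert, Finset.mem_Icc]; omega
    have lhs_eq : ∑ k ∈ Finset.range (m + 1),
        PowerSeries.coeff k (exp R4) * PowerSeries.coeff m ((T * PowerSeries.X) ^ k)
        = (if m = 0 then 1 else 0) + ∑ k ∈ Finset.Icc 1 m,
            algebraMap ℚ R4 (1 / (k.factorial : ℚ)) *
              PowerSeries.coeff m (T ^ k * PowerSeries.X ^ k) := by
      rw [hins, Finset.sum_insert (by simp)]
      congr 1
      · simp [PowerSeries.coeff_exp, PowerSeries.coeff_one, Nat.factorial]
      · refine Finset.sum_congr rfl fun k hk => ?_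
        rw [PowerSeries.coeff_exp, mul_pow]
    rw [lhs_eq]
    have hmul : PowerSeries.coeff m (T * G) = PowerSeries.coeff m (T * SN m) := by
      rw [PowerSeries.coeff_mul, PowerSeries.coeff_mul]
      refine Finset.sum_congr rfl fun p hp => ?_
      rw [Finset.HasAntidiagonal.mem_antidiagonal] at hp
      rw [hGS m p.2 (by omega)]
    rw [map_add, PowerSeries.coeff_one, hmul, hTSN, map_sum]
    simp only [PowerSeries.coeff_C_mul]
  -- Step B : first conjunct
  have hBne : (B : R4) ≠ 0 := by
    intro hb
    have := congrArg (MvPolynomial.eval fun i : Fin 4 => if i = 0 then (1 : ℚ) else 0) hb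
    rw [hB] at this
    simp at this
  have hTne : T ≠ 0 := by
    intro h
    have hc : PowerSeries.constantCoeff T = B := by
      rw [hTdef, map_add, map_mul, PowerSeries.constantCoeff_C, h0,
        PowerSeries.constantCoeff_C, mul_zero, zero_add]
    rw [h, map_zero] at hc
    exact hBne hc.symm
  have expand : T = (PowerSeries.C α₁ * PowerSeries.C β₂ -
      PowerSeries.C α₂ * PowerSeries.C β₁) * F +
      (PowerSeries.C α₁ - PowerSeries.C α₂ - PowerSeries.C β₁ + PowerSeries.C β₂) := by
    rw [hTdef, hA, hB]
    simp only [map_sub, map_mul, map_add]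
  have hF2 : (1 + PowerSeries.C α₁ * F) * (1 + PowerSeries.C β₂ * F) =
      (1 + PowerSeries.C α₂ * F) * (1 + PowerSeries.C β₁ * F) * (1 + T * G) := by
    rw [← expG]; exact hF
  have key : T * F = T * ((1 + PowerSeries.C β₁ * F) * (1 + PowerSeries.C α₂ * F) * G) := by
    rw [expand] at hF2 ⊢
    linear_combination hF2
  have conj1 : F = (1 + PowerSeries.C β₁ * F) * (1 + PowerSeries.C α₂ * F) * G :=
    mul_left_cancel₀ hTne key
  refine ⟨conj1, ?_⟩
  -- Step C : integrality
  have hfactinv : ∀ k : ℕ, (k.factorial : R4) * algebraMap ℚ R4 (1 / (k.factorial : ℚ)) = 1 := by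
    intro k
    rw [show ((k.factorial : ℕ) : R4) = algebraMap ℚ R4 (k.factorial : ℚ) by simp, ← map_mul,
      mul_one_div, div_self (by exact_mod_cast Nat.factorial_ne_zero k), map_one]
  have hchoose : ∀ b k : ℕ, k ≤ b →
      (b.factorial : R4) * algebraMap ℚ R4 (1 / (k.factorial : ℚ)) =
        (b.choose k : R4) * ((b - k).factorial : R4) := by
    intro b k hk
    rw [← Nat.choose_mul_factorial_mul_factorial hk]
    push_cast
    linear_combination ((b.choose k : R4) * ((b - k).factorial : R4)) * hfactinv k
  have hAmem : A ∈ Zr := by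
    rw [hA]
    exact sub_mem (mul_mem (X_mem 0) (X_mem 3)) (mul_mem (X_mem 1) (X_mem 2))
  have hBmem : B ∈ Zr := by
    rw [hB]
    exact add_mem (sub_mem (sub_mem (X_mem 0) (X_mem 1)) (X_mem 2)) (X_mem 3)
  have conj2 : ∀ n : ℕ, (n.factorial : R4) * PowerSeries.coeff n F ∈ Zr := by
    intro n
    induction n using Nat.strong_induction_on with
    | _ n IH =>
      rcases Nat.eq_zero_or_pos n with rfl | hn
      · have : PowerSeries.coeff 0 F = 0 := by
          rw [PowerSeries.coeff_zero_eq_constantCoeff]; exact h0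
        rw [this, mul_zero]; exact zero_mem _
      · have hHF : DrakeAux.H (n - 1) F := fun j hj => IH j (by omega)
        have hHT : DrakeAux.H (n - 1) T := by
          rw [hTdef]
          exact ((DrakeAux.H.C' hAmem).mul hHF).add (DrakeAux.H.C' hBmem)
        have hHP : DrakeAux.H (n - 1)
            ((1 + PowerSeries.C β₁ * F) * (1 + PowerSeries.C α₂ * F)) :=
          (DrakeAux.H.one.add ((DrakeAux.H.C' (X_mem 2)).mul hHF)).mul
            (DrakeAux.H.one.add ((DrakeAux.H.C' (X_mem 1)).mul hHF))
        have hGb : ∀ b ≤ n, (b.factorial : R4) * PowerSeries.coeff b G ∈ Zr := by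
          intro b hb
          rw [coeffG b, Finset.mul_sum]
          refine Subring.sum_mem _ fun k hk => ?_
          rw [Finset.mem_Icc] at hk
          rw [PowerSeries.coeff_mul_X_pow', if_pos hk.2, ← mul_assoc, hchoose b k hk.2, mul_assoc]
          exact mul_mem (natCast_mem _) (hHT.pow (k - 1) (b - k) (by omega))
        rw [conj1, PowerSeries.coeff_mul, Finset.mul_sum]
        refine Subring.sum_mem _ fun p hp => ?_
        rw [Finset.HasAntidiagonal.mem_antidiagonal] at hp
        rcases Nat.eq_zero_or_pos p.2 with h2 | h2
        · have : PowerSeries.coeff p.2 G = 0 := by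
            rw [h2, coeffG]; simp
          rw [this, mul_zero, mul_zero]; exact zero_mem _
        · have heq : (n.factorial : R4) *
              (PowerSeries.coeff p.1 ((1 + PowerSeries.C β₁ * F) *
                (1 + PowerSeries.C α₂ * F)) * PowerSeries.coeff p.2 G)
              = (n.choose p.2 : R4) * ((p.1.factorial : R4) *
                  PowerSeries.coeff p.1 ((1 + PowerSeries.C β₁ * F) *
                    (1 + PowerSeries.C α₂ * F))) *
                ((p.2.factorial : R4) * PowerSeries.coeff p.2 G) := by
            rw [← hp, ← Nat.add_choose_mul_factorial_mul_factorial p.1 p.2]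
            push_cast; ring
          rw [heq]
          exact mul_mem (mul_mem (natCast_mem _) (hHP p.1 (by omega))) (hGb p.2 (by omega))
  intro n
  obtain ⟨p, hp⟩ := conj2 n
  exact ⟨p, hp.symm⟩
end
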